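/- arXiv:2507.13990 — 6 statements merged into one kernel-verified Lean document; each statement's English description precedes it below -/
import Mathlib

section
/- Under Assumption A, if (u,ℓ) is a solution of the free boundary problem (FBP), then the boundary trajectory t ↦ ℓ_t is nondecreasing on [0,∞). -/
open MeasureTheory Set Filter Topology

noncomputable section

/-- Points of `ℝ^d`. -/
abbrev Vec (d : ℕ) := EuclideanSpace ℝ (Fin d)

/-- Assumption A on the fitness function `F`, the branching density `ρ`,
the initial density `u₀` and the initial boundary value `lam₀`. -/
structure AssumptionA (d : ℕ) (F : Vec d → ℝ) (ρ : Vec d → Vec d → ℝ)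
    (u₀ : Vec d → ℝ) (lam₀ : ℝ) : Prop where
  F_cont : Continuous F
  F_unbdd_below : ∀ c : ℝ, ∃ x, F x < c
  F_unbdd_above : ∀ c : ℝ, ∃ x, c < F x
  F_level_null : ∀ a : ℝ, volume (F ⁻¹' {a}) = 0
  ρ_meas : Measurable (Function.uncurry ρ)
  ρ_nonneg : ∀ x y, 0 ≤ ρ x y
  ρ_int : ∀ x, Integrable (ρ x)
  ρ_prob : ∀ x, ∫ y, ρ x y = 1
  ρ_dom : ∃ (ρt : Vec d → ℝ) (c : ℝ), (∀ z, 0 ≤ ρt z) ∧ Integrable ρt ∧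
    (∫ z, ρt z = 1) ∧ ∀ x y, ρ x y ≤ c * ρt (y - x)
  ρ_unif_cont : ∀ ε : ℝ, 0 < ε → ∃ δ : ℝ, 0 < δ ∧
    ∀ x y₁ y₂ : Vec d, dist y₁ y₂ < δ → |ρ x y₁ - ρ x y₂| < ε
  ρ_push_pos : ∀ a : ℝ, ∀ x : Vec d, a < F x → 0 < ∫ y in F ⁻¹' Ioi a, ρ x y
  u₀_nonneg : ∀ x, 0 ≤ u₀ x
  u₀_bdd : ∃ C : ℝ, ∀ x, u₀ x ≤ C
  u₀_int : Integrable u₀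
  u₀_prob : ∫ x, u₀ x = 1
  u₀_cont : ContinuousOn u₀ (F ⁻¹' Ioi lam₀)
  u₀_vanish : ∀ x, F x < lam₀ → u₀ x = 0
  u₀_charge : ∀ δ : ℝ, 0 < δ → ∀ l : ℝ, lam₀ ≤ l → 0 < ∫ x in F ⁻¹' Ioo l (l + δ), u₀ x

/-- `(u, ℓ)` is an admissible pair solving the free boundary problem (FBP):
`ℓ` is càdlàg, `u` is nonnegative, locally bounded in time, continuous in `x`
and continuously differentiable in `t` on `{(x,t) : F x > ℓ t}`, and
(i) `∂ₜ u(x,t) = ∫ u(y,t) ρ(y,x) dy` for `F x > ℓ t`, `t > 0`;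
(ii) `u(x,t) = 0` for `F x ≤ ℓ t`, `t > 0`;
(iii) `∫ u(x,t) dx = 1` for `t > 0`;
(iv) `u(·,0) = u₀`, `ℓ 0 = lam₀`. -/
structure IsFBPSolution (d : ℕ) (F : Vec d → ℝ) (ρ : Vec d → Vec d → ℝ)
    (u₀ : Vec d → ℝ) (lam₀ : ℝ) (u : Vec d → ℝ → ℝ) (ℓ : ℝ → ℝ) : Prop where
  ℓ_rc : ∀ t : ℝ, 0 ≤ t → ContinuousWithinAt ℓ (Ici t) t
  ℓ_ll : ∀ t : ℝ, 0 < t → ∃ L : ℝ, Tendsto ℓ (𝓝[<] t) (𝓝 L)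
  u_nonneg : ∀ x, ∀ t : ℝ, 0 ≤ t → 0 ≤ u x t
  u_bdd : ∀ T : ℝ, 0 < T → ∃ C : ℝ, ∀ x, ∀ t ∈ Icc (0:ℝ) T, u x t ≤ C
  u_meas : ∀ t : ℝ, 0 ≤ t → Measurable fun x => u x t
  u_cont_x : ∀ t : ℝ, 0 ≤ t → ContinuousOn (fun x => u x t) (F ⁻¹' Ioi (ℓ t))
  pde : ∀ x, ∀ t : ℝ, 0 < t → ℓ t < F x →
    HasDerivAt (fun s => u x s) (∫ y, u y t * ρ y x) t
  pde_cont : ∀ x, ContinuousOn (fun t => ∫ y, u y t * ρ y x) {t : ℝ | 0 < t ∧ ℓ t < F x}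
  vanish : ∀ x, ∀ t : ℝ, 0 < t → F x ≤ ℓ t → u x t = 0
  mass : ∀ t : ℝ, 0 < t → ∫ x, u x t = 1
  init_u : ∀ x, u x 0 = u₀ x
  init_ℓ : ℓ 0 = lam₀

lemma lemM {d : ℕ} {F : Vec d → ℝ} {ρ : Vec d → Vec d → ℝ}
    {u₀ : Vec d → ℝ} {lam₀ : ℝ} (hA : AssumptionA d F ρ u₀ lam₀)
    {u : Vec d → ℝ → ℝ} {ℓ : ℝ → ℝ} (hsol : IsFBPSolution d F ρ u₀ lam₀ u ℓ)
    {a b c : ℝ} (ha : 0 < a) (hab : a < b)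
    (hl : ∀ q ∈ Icc a b, ℓ q ≤ c)
    (h0 : ∀ x, F x ≤ c → u x a = 0) : False := by
  set A : Set (Vec d) := F ⁻¹' Ioi c with hAdef
  have hAmeas : MeasurableSet A := (isOpen_Ioi.preimage hA.F_cont).measurableSet
  set q : ℝ := (a + b) / 2 with hqdef
  have haq : a < q := by simp [hqdef]; linarith
  have hqb : q < b := by simp [hqdef]; linarith
  have hq0 : 0 < q := ha.trans haq
  have hb0 : 0 < b := ha.trans hab
  have amem : a ∈ Icc a b := left_mem_Icc.2 hab.le
  have bmem : b ∈ Icc a b := right_mem_Icc.2 hab.le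
  have qmem : q ∈ Icc a b := ⟨haq.le, hqb.le⟩
  -- integrability of u(·, r)
  have hInt : ∀ r ∈ Icc a b, Integrable (fun x => u x r) := by
    intro r hr
    by_contra h
    have hm := hsol.mass r (ha.trans_le hr.1)
    rw [integral_undef h] at hm
    norm_num at hm
  -- derivative
  have hD : ∀ x, c < F x → ∀ r ∈ Icc a b,
      HasDerivAt (u x) (∫ y, u y r * ρ y x) r := fun x hx r hr =>
    hsol.pde x r (ha.trans_le hr.1) ((hl r hr).trans_lt hx)
  have hVnn : ∀ x, ∀ r : ℝ, 0 ≤ r → 0 ≤ ∫ y, u y r * ρ y x := fun x r hr =>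
    integral_nonneg fun y => mul_nonneg (hsol.u_nonneg y r hr) (hA.ρ_nonneg y x)
  have hmono : ∀ x, c < F x → MonotoneOn (u x) (Icc a b) := by
    intro x hx
    apply monotoneOn_of_deriv_nonneg (convex_Icc a b)
    · exact fun r hr => (hD x hx r hr).continuousAt.continuousWithinAt
    · intro r hr
      rw [interior_Icc] at hr
      exact (hD x hx r (Ioo_subset_Icc_self hr)).differentiableAt.differentiableWithinAt
    · intro r hr
      rw [interior_Icc] at hr
      rw [(hD x hx r (Ioo_subset_Icc_self hr)).deriv]
      exact hVnn x r (ha.trans hr.1).le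
  -- mass above c at time a is 1
  have ma1 : ∫ x in A, u x a = 1 := by
    have h1 := hsol.mass a ha
    have hcompl : ∫ x in Aᶜ, u x a = 0 := by
      have : EqOn (fun x => u x a) (fun _ => (0:ℝ)) Aᶜ := by
        intro x hx
        exact h0 x (not_lt.1 (by simpa [hAdef] using hx))
      rw [setIntegral_congr_fun hAmeas.compl this]
      simp
    have := integral_add_compl hAmeas (hInt a amem)
    linarith
  have hmble : ∫ x in A, u x b ≤ 1 := by
    have := setIntegral_le_integral (s := A) (hInt b bmem)
      (ae_of_all _ fun x => hsol.u_nonneg x b hb0.le)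
    rwa [hsol.mass b hb0] at this
  have hdiff_nonneg : 0 ≤ᵐ[volume.restrict A] fun x => u x b - u x a :=
    (ae_restrict_iff' hAmeas).2 (ae_of_all _ fun x hx =>
      sub_nonneg.2 (hmono x hx amem bmem hab.le))
  have hdiffInt : IntegrableOn (fun x => u x b - u x a) A :=
    ((hInt b bmem).sub (hInt a amem)).integrableOn
  have hsub : ∫ x in A, (u x b - u x a) = (∫ x in A, u x b) - ∫ x in A, u x a :=
    integral_sub (hInt b bmem).integrableOn (hInt a amem).integrableOn
  have hzero : ∫ x in A, (u x b - u x a) = 0 := by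
    have hle : ∫ x in A, (u x b - u x a) ≤ 0 := by rw [hsub, ma1]; linarith
    have hge : 0 ≤ ∫ x in A, (u x b - u x a) := integral_nonneg_of_ae hdiff_nonneg
    linarith
  have hae0 : (fun x => u x b - u x a) =ᵐ[volume.restrict A] 0 :=
    (integral_eq_zero_iff_of_nonneg_ae hdiff_nonneg hdiffInt).1 hzero
  -- derivative vanishes at q a.e. on A
  have hVq0 : ∀ᵐ x ∂volume.restrict A, (∫ y, u y q * ρ y x) = 0 := by
    filter_upwards [hae0, ae_restrict_mem hAmeas] with x hx hxA
    have hcF : c < F x := hxA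
    have hba : u x b = u x a := by
      have : u x b - u x a = 0 := hx
      linarith
    have hconst : ∀ r ∈ Icc a b, u x r = u x a := by
      intro r hr
      have h1 := hmono x hcF amem hr hr.1
      have h2 := hmono x hcF hr bmem hr.2
      linarith
    have hEq : (fun r => u x r) =ᶠ[𝓝 q] fun _ => u x a := by
      filter_upwards [Icc_mem_nhds haq hqb] with r hr using hconst r hr
    have hd0 : HasDerivAt (u x) 0 q :=
      hEq.hasDerivAt_iff.2 (hasDerivAt_const q (u x a))
    exact (hD x hcF q qmem).unique hd0
  -- integrability in y
  obtain ⟨ρt, ct, hρt0, hρtInt, _, hdom⟩ := hA.ρ_dom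
  obtain ⟨C, hC⟩ := hsol.u_bdd b hb0
  have hqmem0 : q ∈ Icc (0:ℝ) b := ⟨hq0.le, hqb.le⟩
  have hC0 : 0 ≤ C := le_trans (hsol.u_nonneg 0 q hq0.le) (hC 0 q hqmem0)
  have hmeasρx : ∀ x : Vec d, Measurable fun y => ρ y x := fun x =>
    hA.ρ_meas.comp (measurable_id.prodMk measurable_const)
  have hmeasρy : ∀ y : Vec d, Measurable fun x : Vec d => ENNReal.ofReal (ρ y x) := fun y =>
    (hA.ρ_meas.comp (measurable_const.prodMk measurable_id)).ennreal_ofReal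
  have hIy : ∀ x : Vec d, Integrable (fun y => u y q * ρ y x) := by
    intro x
    have hmeasy : Measurable fun y => u y q * ρ y x :=
      (hsol.u_meas q hq0.le).mul (hmeasρx x)
    have hbd : Integrable (fun y : Vec d => C * ct * ρt (x - y)) := by
      simpa [mul_assoc] using ((hρtInt.comp_sub_left x).const_mul (C * ct))
    apply Integrable.mono' hbd hmeasy.aestronglyMeasurable
    apply ae_of_all
    intro y
    have h1 : 0 ≤ u y q := hsol.u_nonneg y q hq0.le
    have h2 : 0 ≤ ρ y x := hA.ρ_nonneg y x
    rw [Real.norm_eq_abs, abs_of_nonneg (mul_nonneg h1 h2)]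
    calc u y q * ρ y x ≤ C * ρ y x := mul_le_mul_of_nonneg_right (hC y q hqmem0) h2
    _ ≤ C * (ct * ρt (x - y)) := mul_le_mul_of_nonneg_left (hdom y x) hC0
    _ = C * ct * ρt (x - y) := by ring
  -- double lintegral is zero
  have hJ0 : ∫⁻ x in A, ∫⁻ y, ENNReal.ofReal (u y q * ρ y x) = 0 := by
    have hcongr : ∀ᵐ x ∂volume.restrict A,
        (∫⁻ y, ENNReal.ofReal (u y q * ρ y x)) = 0 := by
      filter_upwards [hVq0] with x hx
      rw [← ofReal_integral_eq_lintegral_ofReal (hIy x)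
        (ae_of_all _ fun y => mul_nonneg (hsol.u_nonneg y q hq0.le) (hA.ρ_nonneg y x)), hx]
      simp
    calc ∫⁻ x in A, ∫⁻ y, ENNReal.ofReal (u y q * ρ y x)
        = ∫⁻ x in A, 0 := lintegral_congr_ae hcongr
      _ = 0 := lintegral_zero
  have hmf : Measurable fun p : Vec d × Vec d => ENNReal.ofReal (u p.2 q * ρ p.2 p.1) :=
    (((hsol.u_meas q hq0.le).comp measurable_snd).mul
      (hA.ρ_meas.comp (measurable_snd.prodMk measurable_fst))).ennreal_ofReal
  have hswap := lintegral_lintegral_swap (μ := volume.restrict A) (ν := volume)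
    (f := fun x y => ENNReal.ofReal (u y q * ρ y x)) hmf.aemeasurable
  have htot : ∫⁻ y, ∫⁻ x in A, ENNReal.ofReal (u y q * ρ y x) = 0 := by
    rw [← hswap]; exact hJ0
  have hfac : ∀ y, ∫⁻ x in A, ENNReal.ofReal (u y q * ρ y x)
      = ENNReal.ofReal (u y q) * ∫⁻ x in A, ENNReal.ofReal (ρ y x) := by
    intro y
    rw [← lintegral_const_mul _ (hmeasρy y)]
    apply lintegral_congr
    intro x
    rw [ENNReal.ofReal_mul (hsol.u_nonneg y q hq0.le)]
  have hWmeas : Measurable fun y => ∫⁻ x in A, ENNReal.ofReal (ρ y x) := by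
    apply Measurable.lintegral_prod_right' (f := fun p : Vec d × Vec d =>
      ENNReal.ofReal (ρ p.1 p.2))
    exact hA.ρ_meas.ennreal_ofReal
  have htot2 : ∫⁻ y, ENNReal.ofReal (u y q) * ∫⁻ x in A, ENNReal.ofReal (ρ y x) = 0 := by
    rw [← lintegral_congr hfac]; exact htot
  have hae : ∀ᵐ y : Vec d,
      ENNReal.ofReal (u y q) * ∫⁻ x in A, ENNReal.ofReal (ρ y x) = 0 :=
    (lintegral_eq_zero_iff ((hsol.u_meas q hq0.le).ennreal_ofReal.mul hWmeas)).1 htot2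
  have hWpos : ∀ y, c < F y → (∫⁻ x in A, ENNReal.ofReal (ρ y x)) ≠ 0 := by
    intro y hy hW
    have h2 : ∀ᵐ x ∂volume.restrict A, ENNReal.ofReal (ρ y x) = 0 :=
      (lintegral_eq_zero_iff (hmeasρy y)).1 hW
    have h3 : (fun x => ρ y x) =ᵐ[volume.restrict A] fun _ => 0 := by
      filter_upwards [h2] with x hx
      have := ENNReal.ofReal_eq_zero.1 hx
      linarith [hA.ρ_nonneg y x]
    have h4 : ∫ x in A, ρ y x = 0 := by
      rw [integral_congr_ae h3]; simp
    exact absurd h4 (ne_of_gt (hA.ρ_push_pos c y hy))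
  have huq0 : ∀ᵐ y : Vec d, y ∈ A → u y q = 0 := by
    filter_upwards [hae] with y hy hyA
    have hcF : c < F y := hyA
    rcases mul_eq_zero.1 hy with h | h
    · have := ENNReal.ofReal_eq_zero.1 h
      linarith [hsol.u_nonneg y q hq0.le]
    · exact absurd h (hWpos y hcF)
  have hmq0 : ∫ x in A, u x q = 0 := by
    apply integral_eq_zero_of_ae
    filter_upwards [(ae_restrict_iff' hAmeas).2 huq0] with x hx using hx
  have hmq_ge : ∫ x in A, u x a ≤ ∫ x in A, u x q := by
    apply setIntegral_mono_on (hInt a amem).integrableOn (hInt q qmem).integrableOn hAmeas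
    intro x hx
    exact hmono x hx amem qmem haq.le
  linarith

/-- Under Assumption A, the boundary component of any FBP solution is
nondecreasing on `[0, ∞)`. -/
theorem fbp_boundary_monotone {d : ℕ} (F : Vec d → ℝ) (ρ : Vec d → Vec d → ℝ)
    (u₀ : Vec d → ℝ) (lam₀ : ℝ) (hA : AssumptionA d F ρ u₀ lam₀)
    (u : Vec d → ℝ → ℝ) (ℓ : ℝ → ℝ) (hsol : IsFBPSolution d F ρ u₀ lam₀ u ℓ) :
    ∀ s t : ℝ, 0 ≤ s → s ≤ t → ℓ s ≤ ℓ t := by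
  intro s t hs hst
  by_contra hlt
  push_neg at hlt
  have hst' : s < t := by
    rcases eq_or_lt_of_le hst with h | h
    · rw [h] at hlt; exact absurd hlt (lt_irrefl _)
    · exact h
  set c : ℝ := (ℓ t + ℓ s) / 2 with hcdef
  have hct : ℓ t < c := by simp [hcdef]; linarith
  have hcs : c < ℓ s := by simp [hcdef]; linarith
  set S : Set ℝ := {q | q ∈ Icc s t ∧ c ≤ ℓ q} with hSdef
  have hSs : s ∈ S := ⟨⟨le_refl s, hst⟩, hcs.le⟩
  have hSbdd : BddAbove S := ⟨t, fun q hq => hq.1.2⟩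
  set α : ℝ := sSup S with hαdef
  have hαs : s ≤ α := le_csSup hSbdd hSs
  have hαt : α ≤ t := csSup_le ⟨s, hSs⟩ fun q hq => hq.1.2
  have hα0 : 0 ≤ α := hs.trans hαs
  have hP1 : ∀ q, α < q → q ≤ t → ℓ q < c := by
    intro q h1 h2
    by_contra h
    push_neg at h
    have hqS : q ∈ S := ⟨⟨(lt_of_le_of_lt hαs h1).le, h2⟩, h⟩
    exact absurd (le_csSup hSbdd hqS) (not_le.2 h1)
  have hP2 : ℓ α ≤ c := by
    rcases eq_or_lt_of_le hαt with h | h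
    · rw [h]; exact hct.le
    · have hcw : Tendsto ℓ (𝓝[>] α) (𝓝 (ℓ α)) :=
        (hsol.ℓ_rc α hα0).mono_left (nhdsWithin_mono α Ioi_subset_Ici_self)
      have hev : ∀ᶠ r in 𝓝[>] α, ℓ r ≤ c := by
        filter_upwards [Ioc_mem_nhdsGT_of_mem ⟨le_refl α, h⟩] with r hr
        exact (hP1 r hr.1 hr.2).le
      exact le_of_tendsto hcw hev
  have hαs' : s < α := by
    rcases eq_or_lt_of_le hαs with h | h
    · rw [← h] at hP2; linarith
    · exact h
  have hαpos : 0 < α := lt_of_le_of_lt hs hαs'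
  have hP4 : ∀ x, F x ≤ c → u x α = 0 := by
    intro x hxc
    by_cases hxl : F x ≤ ℓ α
    · exact hsol.vanish x α hαpos hxl
    · push_neg at hxl
      obtain ⟨w, _, hwtend, hwS⟩ := exists_seq_tendsto_sSup ⟨s, hSs⟩ hSbdd
      have hzero : ∀ n, u x (w n) = 0 := by
        intro n
        have hwq := hwS n
        have hcl : F x ≤ ℓ (w n) := hxc.trans hwq.2
        rcases eq_or_lt_of_le (hs.trans hwq.1.1) with h0 | h0
        · rw [← h0, hsol.init_u x]
          apply hA.u₀_vanish
          have hs0 : s = 0 := le_antisymm (by linarith [hwq.1.1]) hs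
          have : ℓ s = lam₀ := by rw [hs0, hsol.init_ℓ]
          linarith
        · exact hsol.vanish x (w n) h0 hcl
      have hcont : ContinuousAt (u x) α := (hsol.pde x α hαpos hxl).continuousAt
      have h1 : Tendsto (fun n => u x (w n)) atTop (𝓝 (u x α)) :=
        (hcont.tendsto).comp hwtend
      have h2 : Tendsto (fun n => u x (w n)) atTop (𝓝 0) := by
        simp only [hzero]
        exact tendsto_const_nhds
      exact tendsto_nhds_unique h1 h2
  obtain ⟨b, hbα, hbc⟩ : ∃ b, α < b ∧ ∀ q ∈ Icc α b, ℓ q ≤ c := by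
    rcases eq_or_lt_of_le hP2 with heq | hlt'
    · have hαt' : α < t := by
        rcases eq_or_lt_of_le hαt with h | h
        · rw [h] at heq; linarith
        · exact h
      refine ⟨t, hαt', fun r hr => ?_⟩
      rcases eq_or_lt_of_le hr.1 with h | h
      · rw [← h]; exact heq.le
      · exact (hP1 r h hr.2).le
    · have hev : ℓ ⁻¹' Iio c ∈ 𝓝[≥] α := (hsol.ℓ_rc α hα0) (Iio_mem_nhds hlt')
      obtain ⟨v, hv, hsub⟩ := mem_nhdsGE_iff_exists_Ico_subset.1 hev
      have hvα : α < v := hv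
      refine ⟨(α + v) / 2, by linarith, fun r hr => ?_⟩
      have hrIco : r ∈ Ico α v := ⟨hr.1, by have := hr.2; simp at this ⊢; linarith⟩
      exact (hsub hrIco).le
  exact lemM hA hsol hαpos hbα hbc hP4
end
end

section
/- Under Assumption A, if (u,ℓ) and (v,m) are both solutions of the free boundary problem (FBP), then for every t > 0, ∫_{ℝ^d} |u(x,t) − v(x,t)| dx ≤ 2 ∫_{F⁻¹((ℓ_t ∨ m_t, ∞))} |u(x,t) − v(x,t)| dx, where ℓ_t ∨ m_t = max(ℓ_t, m_t). -/
open MeasureTheory Set Filter Topology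

noncomputable section

/-- Abstract key lemma: if `f, g` are nonnegative integrable with total mass 1
and `g` vanishes off a measurable set `A`, then `∫ |f-g| ≤ 2 ∫_A |f-g|`. -/
lemma key_L1_lemma {α : Type*} [MeasureSpace α] {f g : α → ℝ} {A : Set α}
    (hAm : MeasurableSet A) (hf : Integrable f) (hg : Integrable g)
    (hfnn : ∀ x, 0 ≤ f x) (hfm : ∫ x, f x = 1) (hgm : ∫ x, g x = 1)
    (hg0 : ∀ x ∉ A, g x = 0) :
    ∫ x, |f x - g x| ≤ 2 * ∫ x in A, |f x - g x| := by
  have habs : Integrable (fun x => |f x - g x|) := (hf.sub hg).abs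
  have hsplit : (∫ x in A, |f x - g x|) + ∫ x in Aᶜ, |f x - g x| = ∫ x, |f x - g x| :=
    integral_add_compl hAm habs
  have hcompl : ∫ x in Aᶜ, |f x - g x| = ∫ x in Aᶜ, f x := by
    refine setIntegral_congr_fun hAm.compl (fun x hx => ?_)
    rw [hg0 x hx, sub_zero, abs_of_nonneg (hfnn x)]
  have hgcompl : ∫ x in Aᶜ, g x = 0 := by
    rw [setIntegral_congr_fun hAm.compl (fun x hx => hg0 x hx)]
    simp
  have hgA : ∫ x in A, g x = 1 := by
    have := integral_add_compl hAm hg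
    rw [hgcompl, add_zero, hgm] at this
    exact this
  have hfA : ∫ x in Aᶜ, f x = 1 - ∫ x in A, f x := by
    have := integral_add_compl hAm hf
    rw [hfm] at this
    linarith
  have hmono : (∫ x in A, g x) - ∫ x in A, f x ≤ ∫ x in A, |f x - g x| := by
    rw [← integral_sub hg.integrableOn hf.integrableOn]
    refine integral_mono ((hg.sub hf).integrableOn) (habs.integrableOn) (fun x => ?_)
    calc g x - f x ≤ |g x - f x| := le_abs_self _
      _ = |f x - g x| := abs_sub_comm _ _
  have : ∫ x in Aᶜ, f x ≤ ∫ x in A, |f x - g x| := by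
    rw [hfA, ← hgA]; exact hmono
  linarith

/-- For two FBP solutions, the `L¹` distance of the densities at time `t` is
at most twice their `L¹` distance on `F⁻¹((ℓ_t ∨ m_t, ∞))`. -/
theorem fbp_L1_distance_bound {d : ℕ} (F : Vec d → ℝ) (ρ : Vec d → Vec d → ℝ)
    (u₀ : Vec d → ℝ) (lam₀ : ℝ) (hA : AssumptionA d F ρ u₀ lam₀)
    (u v : Vec d → ℝ → ℝ) (ℓ m : ℝ → ℝ)
    (hu : IsFBPSolution d F ρ u₀ lam₀ u ℓ) (hv : IsFBPSolution d F ρ u₀ lam₀ v m) :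
    ∀ t : ℝ, 0 < t →
      ∫ x, |u x t - v x t| ≤ 2 * ∫ x in F ⁻¹' Ioi (max (ℓ t) (m t)), |u x t - v x t| := by
  intro t ht
  set a := max (ℓ t) (m t) with ha
  have hAm : MeasurableSet (F ⁻¹' Ioi a) := hA.F_cont.measurable measurableSet_Ioi
  have hui : Integrable (fun x => u x t) := by
    by_contra h
    have := hu.mass t ht
    rw [integral_undef h] at this
    norm_num at this
  have hvi : Integrable (fun x => v x t) := by
    by_contra h
    have := hv.mass t ht
    rw [integral_undef h] at this
    norm_num at this
  rcases le_total (ℓ t) (m t) with hle | hle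
  · have hamax : a = m t := max_eq_right hle
    refine key_L1_lemma hAm hui hvi (fun x => hu.u_nonneg x t ht.le)
      (hu.mass t ht) (hv.mass t ht) (fun x hx => ?_)
    exact hv.vanish x t ht (by simp only [mem_preimage, mem_Ioi, not_lt, hamax] at hx; exact hx)
  · have hamax : a = ℓ t := max_eq_left hle
    have h := key_L1_lemma hAm hvi hui (fun x => hv.u_nonneg x t ht.le)
      (hv.mass t ht) (hu.mass t ht)
      (fun x hx => hu.vanish x t ht (by simp only [mem_preimage, mem_Ioi, not_lt, hamax] at hx; exact hx))
    simpa [abs_sub_comm] using h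
end
end

section
/- Under Assumption A, let (u,ℓ) be a solution of the free boundary problem (FBP), let s > 0, and let λ = ℓ_{s−} denote the left limit of ℓ at s. If ℓ_θ ≤ λ for all θ ∈ [0,s), then ∫_{F⁻¹((λ,∞))} u(x,s) dx = 1. -/
open MeasureTheory Set Filter Topology

noncomputable section

/-- If the boundary stays below its left limit `lam = ℓ_{s-}` on `[0,s)`, then the
density at time `s` has full mass above level `lam`. -/
theorem fbp_full_mass_above_left_limit {d : ℕ} (F : Vec d → ℝ) (ρ : Vec d → Vec d → ℝ)
    (u₀ : Vec d → ℝ) (lam₀ : ℝ) (hA : AssumptionA d F ρ u₀ lam₀)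
    (u : Vec d → ℝ → ℝ) (ℓ : ℝ → ℝ) (hsol : IsFBPSolution d F ρ u₀ lam₀ u ℓ)
    (s : ℝ) (hs : 0 < s) (lam : ℝ) (hlim : Tendsto ℓ (𝓝[<] s) (𝓝 lam))
    (hbelow : ∀ θ ∈ Ico (0:ℝ) s, ℓ θ ≤ lam) :
    ∫ x in F ⁻¹' Ioi lam, u x s = 1 := by
  -- u (x, s) = 0 whenever F x < lam
  have hzero : ∀ x, F x < lam → u x s = 0 := by
    intro x hx
    by_cases hc : F x ≤ ℓ s
    · exact hsol.vanish x s hs hc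
    push_neg at hc
    have hcont : ContinuousAt (fun t => u x t) s := (hsol.pde x s hs hc).continuousAt
    have h1 : ∀ᶠ θ in 𝓝[<] s, F x < ℓ θ := hlim (Ioi_mem_nhds hx)
    have h2 : Ioo (0:ℝ) s ∈ 𝓝[<] s := Ioo_mem_nhdsLT_of_mem ⟨hs, le_refl s⟩
    have hev : ∀ᶠ θ in 𝓝[<] s, u x θ = 0 := by
      filter_upwards [h1, h2] with θ hθ1 hθ2
      exact hsol.vanish x θ hθ2.1 hθ1.le
    have ht1 : Tendsto (fun θ => u x θ) (𝓝[<] s) (𝓝 (u x s)) :=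
      hcont.tendsto.mono_left nhdsWithin_le_nhds
    have ht2 : Tendsto (fun θ => u x θ) (𝓝[<] s) (𝓝 0) :=
      Tendsto.congr' (Filter.EventuallyEq.symm hev) tendsto_const_nhds
    exact tendsto_nhds_unique ht1 ht2
  have hint : Integrable (fun x => u x s) := by
    by_contra h
    have hm := hsol.mass s hs
    rw [integral_undef h] at hm
    norm_num at hm
  have hAm : MeasurableSet (F ⁻¹' Ioi lam) := hA.F_cont.measurable measurableSet_Ioi
  have hcompl : ∫ x in (F ⁻¹' Ioi lam)ᶜ, u x s = 0 := by
    have hae : (fun x => u x s) =ᵐ[volume.restrict (F ⁻¹' Ioi lam)ᶜ] 0 := by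
      rw [EventuallyEq, ae_restrict_iff' hAm.compl]
      have hnull : volume (F ⁻¹' {lam}) = 0 := hA.F_level_null lam
      have hae0 : ∀ᵐ x : Vec d, x ∉ F ⁻¹' {lam} :=
        (MeasureTheory.measure_eq_zero_iff_ae_notMem (μ := volume)).mp hnull
      filter_upwards [hae0] with x hx hxc
      have hle : F x ≤ lam := not_lt.mp hxc
      exact hzero x (lt_of_le_of_ne hle (fun h => hx h))
    rw [integral_congr_ae hae]; simp
  have hsplit := integral_add_compl hAm hint
  have hm := hsol.mass s hs
  linarith
end
end

section
/- Under Assumption A, let (u,ℓ) be a solution of the free boundary problem (FBP). Then there do not exist times 0 ≤ s < t such that ℓ_θ ≤ ℓ_s for all θ ∈ [0,t]. Equivalently, for every 0 ≤ s < t one has sup_{θ ∈ [0,t]} ℓ_θ > ℓ_s. -/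
open MeasureTheory Set Filter Topology

noncomputable section

section helpers

/-- Composition `p ↦ v p.1 (g p.2)` is measurable when `g` is measurable with countable
range and each relevant time-slice of `v` is measurable. -/
lemma fbp_meas_comp_cr_prod {α : Type*} [MeasurableSpace α] {g : ℝ → ℝ} (hg : Measurable g)
    (hcr : (Set.range g).Countable) (v : α → ℝ → ℝ)
    (hv : ∀ q ∈ Set.range g, Measurable fun x => v x q) :
    Measurable fun p : α × ℝ => v p.1 (g p.2) := by
  intro B hB
  have hset : (fun p : α × ℝ => v p.1 (g p.2)) ⁻¹' B
      = ⋃ q ∈ Set.range g, (((fun x => v x q) ⁻¹' B) ×ˢ (g ⁻¹' {q})) := by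
    ext p
    simp only [mem_preimage, mem_iUnion, mem_prod, mem_singleton_iff, exists_prop]
    constructor
    · intro h
      exact ⟨g p.2, ⟨p.2, rfl⟩, h, rfl⟩
    · rintro ⟨q, _, h1, h2⟩
      rw [h2]; exact h1
  rw [hset]
  exact MeasurableSet.biUnion hcr fun q hq => ((hv q hq) hB).prod (hg (measurableSet_singleton q))

/-- A grid of rational times approaching any positive time from the right. -/
def fbpRf (n : ℕ) (σ : ℝ) : ℝ := (((max ⌊σ * (n + 1)⌋ 0 : ℤ) : ℝ) + 1) / (n + 1)

lemma fbpRf_measurable (n : ℕ) : Measurable (fbpRf n) := by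
  unfold fbpRf
  refine Measurable.div_const (Measurable.add_const ?_ 1) _
  exact measurable_from_top.comp
    ((Int.measurable_floor.comp (measurable_id.mul_const _)).max measurable_const)

lemma fbpRf_range_countable (n : ℕ) : (Set.range (fbpRf n)).Countable := by
  refine (Set.countable_range fun k : ℤ => (((k : ℤ) : ℝ) + 1) / (n + 1)).mono ?_
  rintro _ ⟨σ, rfl⟩
  exact ⟨max ⌊σ * (n + 1)⌋ 0, rfl⟩

lemma fbpRf_gt {σ : ℝ} (hσ : 0 < σ) (n : ℕ) : σ < fbpRf n σ := by
  have hn : (0 : ℝ) < n + 1 := by positivity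
  have hfl : (0 : ℤ) ≤ ⌊σ * (n + 1)⌋ := Int.floor_nonneg.2 (by positivity)
  unfold fbpRf
  rw [max_eq_left hfl, lt_div_iff₀ hn]
  exact Int.lt_floor_add_one _

lemma fbpRf_le {σ : ℝ} (hσ : 0 < σ) (n : ℕ) : fbpRf n σ ≤ σ + 1 / (n + 1) := by
  have hn : (0 : ℝ) < n + 1 := by positivity
  have hfl : (0 : ℤ) ≤ ⌊σ * (n + 1)⌋ := Int.floor_nonneg.2 (by positivity)
  have h1 : ((⌊σ * (n + 1)⌋ : ℝ) + 1) ≤ σ * (n + 1) + 1 := by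
    linarith [Int.floor_le (σ * (n + 1))]
  unfold fbpRf
  rw [max_eq_left hfl, div_le_iff₀ hn]
  have : (σ + 1 / (n + 1)) * (n + 1) = σ * (n + 1) + 1 := by field_simp
  rw [this]; exact h1

lemma fbpRf_tendsto {σ : ℝ} (hσ : 0 < σ) : Tendsto (fun n => fbpRf n σ) atTop (𝓝 σ) := by
  have h1 : Tendsto (fun n : ℕ => σ + 1 / ((n : ℝ) + 1)) atTop (𝓝 (σ + 0)) :=
    tendsto_const_nhds.add tendsto_one_div_add_atTop_nhds_zero_nat
  rw [add_zero] at h1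
  exact tendsto_of_tendsto_of_tendsto_of_le_of_le tendsto_const_nhds h1
    (fun n => (fbpRf_gt hσ n).le) (fun n => fbpRf_le hσ n)

end helpers
section fbpcore

variable {d : ℕ} {F : Vec d → ℝ} {ρ : Vec d → Vec d → ℝ} {u₀ : Vec d → ℝ} {lam₀ : ℝ}
  {u : Vec d → ℝ → ℝ} {ℓ : ℝ → ℝ}

lemma fbp_rho_left_meas (hA : AssumptionA d F ρ u₀ lam₀) (x : Vec d) :
    Measurable fun y => ρ y x :=
  hA.ρ_meas.comp (measurable_id.prodMk measurable_const)

/-- Integrability of `y ↦ v y * ρ y x` for nonnegative bounded measurable `v`. -/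
lemma fbp_integrable_mul_rho (hA : AssumptionA d F ρ u₀ lam₀) {v : Vec d → ℝ}
    (hv : Measurable v) {C : ℝ} (h0 : ∀ y, 0 ≤ v y) (hle : ∀ y, v y ≤ C) (x : Vec d) :
    Integrable fun y => v y * ρ y x := by
  obtain ⟨ρt, c, hρt0, hρtint, hρtsum, hdom⟩ := hA.ρ_dom
  refine Integrable.mono' (((hρtint.comp_sub_left x).const_mul c).const_mul C) ?_ ?_
  · exact (hv.mul (fbp_rho_left_meas hA x)).aestronglyMeasurable
  · refine Eventually.of_forall fun y => ?_
    have h1 : 0 ≤ v y * ρ y x := mul_nonneg (h0 y) (hA.ρ_nonneg y x)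
    rw [Real.norm_eq_abs, abs_of_nonneg h1]
    exact mul_le_mul (hle y) (hdom y x) (hA.ρ_nonneg y x) (le_trans (h0 y) (hle y))

/-- A uniform bound for the flux. -/
lemma fbp_flux_bound (hA : AssumptionA d F ρ u₀ lam₀)
    (hsol : IsFBPSolution d F ρ u₀ lam₀ u ℓ) {T : ℝ} (hT : 0 < T) :
    ∃ K : ℝ, 0 ≤ K ∧ ∀ x : Vec d, ∀ σ ∈ Icc (0:ℝ) T, (∫ y, u y σ * ρ y x) ≤ K := by
  obtain ⟨ρt, c, hρt0, hρtint, hρtsum, hdom⟩ := hA.ρ_dom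
  obtain ⟨C, hC⟩ := hsol.u_bdd T hT
  have hC0 : 0 ≤ C :=
    le_trans (hsol.u_nonneg 0 T hT.le) (hC 0 T ⟨hT.le, le_rfl⟩)
  have hc0 : 0 ≤ C * c ∨ True := Or.inr trivial
  refine ⟨max (C * c) 0, le_max_right _ _, fun x σ hσ => ?_⟩
  have hint1 : Integrable fun y => u y σ * ρ y x :=
    fbp_integrable_mul_rho hA (hsol.u_meas σ hσ.1) (fun y => hsol.u_nonneg y σ hσ.1)
      (fun y => hC y σ hσ) x
  have hint2 : Integrable fun y => C * (c * ρt (x - y)) :=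
    ((hρtint.comp_sub_left x).const_mul c).const_mul C
  have h1 : (∫ y, u y σ * ρ y x) ≤ ∫ y, C * (c * ρt (x - y)) := by
    refine integral_mono hint1 hint2 fun y => ?_
    exact mul_le_mul (hC y σ hσ) (hdom y x) (hA.ρ_nonneg y x) hC0
  have h2 : (∫ y, C * (c * ρt (x - y))) = C * c := by
    rw [integral_const_mul, integral_const_mul, integral_sub_left_eq_self ρt volume x, hρtsum]
    ring
  rw [h2] at h1
  exact h1.trans (le_max_left _ _)

lemma fbp_integrable_u (hsol : IsFBPSolution d F ρ u₀ lam₀ u ℓ) {θ : ℝ} (hθ : 0 < θ) :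
    Integrable fun x => u x θ := by
  by_contra h
  have := hsol.mass θ hθ
  rw [integral_undef h] at this
  norm_num at this

/-- Fundamental theorem of calculus along the flow, above the barrier. -/
lemma fbp_ftc (hsol : IsFBPSolution d F ρ u₀ lam₀ u ℓ) {x : Vec d} {a b : ℝ}
    (h0 : 0 < a) (hab : a ≤ b) (hcov : ∀ σ ∈ Icc a b, ℓ σ < F x) :
    u x b = u x a + ∫ σ in Ioc a b, (∫ y, u y σ * ρ y x) := by
  have hderiv : ∀ σ ∈ uIcc a b, HasDerivAt (fun s => u x s) (∫ y, u y σ * ρ y x) σ := by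
    rw [uIcc_of_le hab]
    intro σ hσ
    exact hsol.pde x σ (lt_of_lt_of_le h0 hσ.1) (hcov σ hσ)
  have hcont : ContinuousOn (fun σ => ∫ y, u y σ * ρ y x) (uIcc a b) := by
    refine (hsol.pde_cont x).mono ?_
    rw [uIcc_of_le hab]
    intro σ hσ
    exact ⟨lt_of_lt_of_le h0 hσ.1, hcov σ hσ⟩
  have hii : IntervalIntegrable (fun σ => ∫ y, u y σ * ρ y x) volume a b := hcont.intervalIntegrable
  have hftc := intervalIntegral.integral_eq_sub_of_hasDerivAt hderiv hii
  rw [intervalIntegral.integral_of_le hab] at hftc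
  linarith [hftc]

/-- Monotonicity of `u x ·` above the barrier. -/
lemma fbp_umono (hA : AssumptionA d F ρ u₀ lam₀) (hsol : IsFBPSolution d F ρ u₀ lam₀ u ℓ) {x : Vec d} {a b : ℝ}
    (h0 : 0 < a) (hab : a ≤ b) (hcov : ∀ σ ∈ Icc a b, ℓ σ < F x) :
    u x a ≤ u x b := by
  have h := fbp_ftc hsol h0 hab hcov
  have hnn : 0 ≤ ∫ σ in Ioc a b, (∫ y, u y σ * ρ y x) := by
    refine setIntegral_nonneg measurableSet_Ioc fun σ hσ => ?_
    refine integral_nonneg fun y => ?_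
    exact mul_nonneg (hsol.u_nonneg y σ (le_of_lt (h0.trans hσ.1))) (hA.ρ_nonneg y x)
  linarith

end fbpcore
section fbpcore2

variable {d : ℕ} {F : Vec d → ℝ} {ρ : Vec d → Vec d → ℝ} {u₀ : Vec d → ℝ} {lam₀ : ℝ}
  {u : Vec d → ℝ → ℝ} {ℓ : ℝ → ℝ}

/-- A uniform bound for integrals against the kernel. -/
lemma fbp_mul_rho_bound (hA : AssumptionA d F ρ u₀ lam₀) {v : Vec d → ℝ}
    (hv : Measurable v) {C : ℝ} (h0 : ∀ y, 0 ≤ v y) (hle : ∀ y, v y ≤ C) (hC0 : 0 ≤ C) :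
    ∃ K : ℝ, 0 ≤ K ∧ ∀ x : Vec d, (∫ y, v y * ρ y x) ≤ K := by
  obtain ⟨ρt, c, hρt0, hρtint, hρtsum, hdom⟩ := hA.ρ_dom
  refine ⟨max (C * c) 0, le_max_right _ _, fun x => ?_⟩
  have h1 : (∫ y, v y * ρ y x) ≤ ∫ y, C * (c * ρt (x - y)) :=
    integral_mono (fbp_integrable_mul_rho hA hv h0 hle x)
      (((hρtint.comp_sub_left x).const_mul c).const_mul C)
      (fun y => mul_le_mul (hle y) (hdom y x) (hA.ρ_nonneg y x) hC0)
  have h2 : (∫ y, C * (c * ρt (x - y))) = C * c := by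
    rw [integral_const_mul, integral_const_mul, integral_sub_left_eq_self ρt volume x, hρtsum]
    ring
  rw [h2] at h1; exact h1.trans (le_max_left _ _)

/-- At any positive time the mass is entirely above the current barrier. -/
lemma fbp_massE (hA : AssumptionA d F ρ u₀ lam₀) (hsol : IsFBPSolution d F ρ u₀ lam₀ u ℓ)
    {θ : ℝ} (hθ : 0 < θ) : ∫ x in F ⁻¹' Ioi (ℓ θ), u x θ = 1 := by
  have hE : MeasurableSet (F ⁻¹' Ioi (ℓ θ)) := hA.F_cont.measurable measurableSet_Ioi
  have hint := fbp_integrable_u hsol hθ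
  have hsplit := integral_add_compl hE hint
  have hzero : ∫ x in (F ⁻¹' Ioi (ℓ θ))ᶜ, u x θ = 0 := by
    have heq : EqOn (fun x => u x θ) (fun _ => (0:ℝ)) ((F ⁻¹' Ioi (ℓ θ))ᶜ) := by
      intro x hx
      exact hsol.vanish x θ hθ (not_lt.1 (by simpa using hx))
    rw [setIntegral_congr_fun hE.compl heq, integral_zero]
  rw [hzero, add_zero] at hsplit
  rw [hsplit]; exact hsol.mass θ hθ

/-- Core contradiction: if the barrier stays below `Λ` on `[a,b]` and at time `a` all the
mass is above `Λ`, we get a contradiction. -/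
lemma fbp_core (hA : AssumptionA d F ρ u₀ lam₀) (hsol : IsFBPSolution d F ρ u₀ lam₀ u ℓ)
    {a b Λ : ℝ} (ha : 0 < a) (hab : a < b)
    (hΛ : ∀ σ ∈ Icc a b, ℓ σ ≤ Λ)
    (hm : ∫ x in F ⁻¹' Ioi Λ, u x a = 1) : False := by
  have hb0 : 0 < b := ha.trans hab
  set E : Set (Vec d) := F ⁻¹' Ioi Λ with hEdef
  have hE : MeasurableSet E := hA.F_cont.measurable measurableSet_Ioi
  obtain ⟨C, hC⟩ := hsol.u_bdd b hb0
  have hC0 : 0 ≤ C := le_trans (hsol.u_nonneg 0 b hb0.le) (hC 0 b ⟨hb0.le, le_rfl⟩)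
  set w : Vec d → ℝ := E.indicator (fun y => u y a) with hwdef
  have hwmeas : Measurable w := (hsol.u_meas a ha.le).indicator hE
  have hw0 : ∀ y, 0 ≤ w y := fun y => indicator_nonneg (fun z _ => hsol.u_nonneg z a ha.le) y
  have hwleu : ∀ y, w y ≤ u y a :=
    fun y => indicator_le_self' (fun z _ => hsol.u_nonneg z a ha.le) y
  have hwC : ∀ y, w y ≤ C := fun y => (hwleu y).trans (hC y a ⟨ha.le, hab.le⟩)
  have hwint : Integrable w := (fbp_integrable_u hsol ha).indicator hE
  have hwsum : ∫ y, w y = 1 := by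
    rw [hwdef, integral_indicator hE]; exact hm
  have hwρint : ∀ x : Vec d, Integrable fun y => w y * ρ y x :=
    fun x => fbp_integrable_mul_rho hA hwmeas hw0 hwC x
  have huρint : ∀ x : Vec d, ∀ σ ∈ Icc a b, Integrable fun y => u y σ * ρ y x := by
    intro x σ hσ
    exact fbp_integrable_mul_rho hA (hsol.u_meas σ (ha.le.trans hσ.1))
      (fun y => hsol.u_nonneg y σ (ha.le.trans hσ.1))
      (fun y => hC y σ ⟨ha.le.trans hσ.1, hσ.2⟩) x
  set φ : Vec d → ℝ := fun x => ∫ y, w y * ρ y x with hφdef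
  have hφ0 : ∀ x, 0 ≤ φ x := fun x => integral_nonneg fun y => mul_nonneg (hw0 y) (hA.ρ_nonneg y x)
  have hφmeas : Measurable φ := by
    have hm2 : Measurable fun q : Vec d × Vec d => w q.2 * ρ q.2 q.1 :=
      (hwmeas.comp measurable_snd).mul (hA.ρ_meas.comp (measurable_snd.prodMk measurable_fst))
    exact hm2.stronglyMeasurable.integral_prod_right'.measurable
  obtain ⟨K, hK0, hKφ⟩ := fbp_mul_rho_bound hA hwmeas hw0 hwC hC0
  -- pointwise flux lower bound
  have h1 : ∀ x ∈ E, ∀ σ ∈ Icc a b, φ x ≤ ∫ y, u y σ * ρ y x := by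
    intro x hx σ hσ
    refine integral_mono (hwρint x) (huρint x σ hσ) fun y => ?_
    by_cases hy : y ∈ E
    · have hwy : w y = u y a := indicator_of_mem hy _
      have hmono : u y a ≤ u y σ :=
        fbp_umono hA hsol ha hσ.1 fun ς hς => lt_of_le_of_lt (hΛ ς ⟨hς.1, hς.2.trans hσ.2⟩) hy
      rw [hwy]
      exact mul_le_mul_of_nonneg_right hmono (hA.ρ_nonneg y x)
    · have hwy : w y = 0 := indicator_of_notMem hy _
      rw [hwy, zero_mul]
      exact mul_nonneg (hsol.u_nonneg y σ (ha.le.trans hσ.1)) (hA.ρ_nonneg y x)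
  -- pointwise growth
  have h2 : ∀ x ∈ E, u x a + (b - a) * φ x ≤ u x b := by
    intro x hx
    have hcov : ∀ σ ∈ Icc a b, ℓ σ < F x := fun σ hσ => lt_of_le_of_lt (hΛ σ hσ) hx
    have hftc := fbp_ftc hsol ha hab.le hcov
    have hIoc : IntegrableOn (fun σ => ∫ y, u y σ * ρ y x) (Ioc a b) := by
      have hconti : ContinuousOn (fun σ => ∫ y, u y σ * ρ y x) (Icc a b) :=
        (hsol.pde_cont x).mono fun σ hσ => ⟨ha.trans_le hσ.1, hcov σ hσ⟩
      exact hconti.integrableOn_Icc.mono_set Ioc_subset_Icc_self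
    have hconst : ∫ _ in Ioc a b, φ x = (b - a) * φ x := by
      rw [setIntegral_const, Real.volume_real_Ioc_of_le hab.le, smul_eq_mul]
    have hmono2 : ∫ _ in Ioc a b, φ x ≤ ∫ σ in Ioc a b, (∫ y, u y σ * ρ y x) := by
      refine setIntegral_mono_on (integrableOn_const measure_Ioc_lt_top.ne) hIoc
        measurableSet_Ioc fun σ hσ => h1 x hx σ (Ioc_subset_Icc_self hσ)
    rw [hftc]; rw [hconst] at hmono2; linarith
  -- integral bookkeeping
  have hubint : IntegrableOn (fun x => u x b) E := (fbp_integrable_u hsol hb0).integrableOn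
  have huaint : IntegrableOn (fun x => u x a) E := (fbp_integrable_u hsol ha).integrableOn
  have hEb_le : ∫ x in E, u x b ≤ 1 := by
    rw [← hsol.mass b hb0]
    exact setIntegral_le_integral (fbp_integrable_u hsol hb0)
      (Eventually.of_forall fun x => hsol.u_nonneg x b hb0.le)
  have hdiffint : IntegrableOn (fun x => u x b - u x a) E := hubint.sub huaint
  have hdiff_le : ∫ x in E, (u x b - u x a) ≤ 0 := by
    rw [integral_sub hubint huaint, hm]; linarith
  have hdiff_nn : ∀ x ∈ E, 0 ≤ u x b - u x a := by
    intro x hx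
    have hh2 := h2 x hx
    have hh0 := hφ0 x
    nlinarith
  -- localization: φ vanishes a.e. on E
  have hφae : ∀ᵐ x, x ∈ E → φ x = 0 := by
    have hloc : ∀ R : ℕ, ∀ᵐ x, x ∈ E ∩ Metric.closedBall 0 R → φ x = 0 := by
      intro R
      set ER : Set (Vec d) := E ∩ Metric.closedBall 0 R with hERdef
      have hER : MeasurableSet ER := hE.inter measurableSet_closedBall
      have hfin : volume ER < ⊤ :=
        lt_of_le_of_lt (measure_mono inter_subset_right)
          (isCompact_closedBall (0 : Vec d) R).measure_lt_top
      have hφint : IntegrableOn φ ER := by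
        refine Integrable.mono' (g := fun _ => K) (integrableOn_const hfin.ne)
          (hφmeas.aestronglyMeasurable.restrict) (Eventually.of_forall fun x => ?_)
        rw [Real.norm_eq_abs, abs_of_nonneg (hφ0 x)]
        exact hKφ x
      have e1 : ∫ x in ER, ((b - a) * φ x) ≤ ∫ x in ER, (u x b - u x a) := by
        refine setIntegral_mono_on (hφint.const_mul _) (hdiffint.mono_set inter_subset_left)
          hER fun x hx => ?_
        have := h2 x hx.1; linarith
      have e2 : ∫ x in ER, (u x b - u x a) ≤ ∫ x in E, (u x b - u x a) := by
        refine setIntegral_mono_set hdiffint ?_ (HasSubset.Subset.eventuallyLE inter_subset_left)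
        exact (ae_restrict_iff' hE).2 (Eventually.of_forall hdiff_nn)
      have e3 : ∫ x in ER, ((b - a) * φ x) = (b - a) * ∫ x in ER, φ x := integral_const_mul _ _
      have hges : 0 ≤ ∫ x in ER, φ x := setIntegral_nonneg hER fun x _ => hφ0 x
      have hz : ∫ x in ER, φ x = 0 := by nlinarith
      have hzz := (integral_eq_zero_iff_of_nonneg_ae
        (Eventually.of_forall fun x => hφ0 x) hφint).1 hz
      exact (ae_restrict_iff' hER).1 hzz
    have hall := ae_all_iff.2 hloc
    refine hall.mono fun x hx hxE => ?_
    obtain ⟨R, hR⟩ := exists_nat_ge ‖x‖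
    exact hx R ⟨hxE, by simpa [mem_closedBall_zero_iff] using hR⟩
  -- transfer to lintegrals and Tonelli
  have hofφ : ∀ x, ENNReal.ofReal (φ x) = ∫⁻ y, ENNReal.ofReal (w y) * ENNReal.ofReal (ρ y x) := by
    intro x
    rw [hφdef, ofReal_integral_eq_lintegral_ofReal (hwρint x)
      (Eventually.of_forall fun y => mul_nonneg (hw0 y) (hA.ρ_nonneg y x))]
    exact lintegral_congr fun y => ENNReal.ofReal_mul (hw0 y)
  have hlz : ∫⁻ x in E, ENNReal.ofReal (φ x) = 0 := by
    have h0' : ∀ᵐ x ∂(volume.restrict E), ENNReal.ofReal (φ x) = 0 :=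
      ((ae_restrict_iff' hE).2 hφae).mono fun x hx => by rw [hx, ENNReal.ofReal_zero]
    rw [lintegral_congr_ae h0', lintegral_zero]
  have hmeas2 : Measurable
      (Function.uncurry fun (x : Vec d) (y : Vec d) =>
        ENNReal.ofReal (w y) * ENNReal.ofReal (ρ y x)) := by
    refine Measurable.mul (f := fun p : Vec d × Vec d => ENNReal.ofReal (w p.2))
      (g := fun p : Vec d × Vec d => ENNReal.ofReal (ρ p.2 p.1)) ?_ ?_
    · exact (hwmeas.comp measurable_snd).ennreal_ofReal
    · exact (hA.ρ_meas.comp (measurable_snd.prodMk measurable_fst)).ennreal_ofReal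
  have hswap : ∫⁻ y, ENNReal.ofReal (w y) * (∫⁻ x in E, ENNReal.ofReal (ρ y x)) = 0 := by
    calc ∫⁻ y, ENNReal.ofReal (w y) * (∫⁻ x in E, ENNReal.ofReal (ρ y x))
        = ∫⁻ y, ∫⁻ x in E, ENNReal.ofReal (w y) * ENNReal.ofReal (ρ y x) := by
          refine lintegral_congr fun y => ?_
          exact (lintegral_const_mul _
            ((hA.ρ_meas.comp (measurable_const.prodMk measurable_id)).ennreal_ofReal)).symm
      _ = ∫⁻ x in E, ∫⁻ y, ENNReal.ofReal (w y) * ENNReal.ofReal (ρ y x) :=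
          (lintegral_lintegral_swap hmeas2.aemeasurable).symm
      _ = ∫⁻ x in E, ENNReal.ofReal (φ x) := lintegral_congr fun x => (hofφ x).symm
      _ = 0 := hlz
  have haezero : ∀ᵐ y, ENNReal.ofReal (w y) * (∫⁻ x in E, ENNReal.ofReal (ρ y x)) = 0 := by
    have hmeasy : Measurable fun y =>
        ENNReal.ofReal (w y) * (∫⁻ x in E, ENNReal.ofReal (ρ y x)) := by
      refine (hwmeas.ennreal_ofReal).mul ?_
      exact Measurable.lintegral_prod_right
        (hA.ρ_meas.ennreal_ofReal)
    exact (lintegral_eq_zero_iff hmeasy).1 hswap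
  have hwzero : ∀ᵐ y, w y = 0 := by
    refine haezero.mono fun y hy => ?_
    by_contra hne
    have hwpos : 0 < w y := lt_of_le_of_ne (hw0 y) (Ne.symm hne)
    have hyE : y ∈ E := by
      by_contra hyE
      exact hne (indicator_of_notMem hyE _)
    have hQ : (∫⁻ x in E, ENNReal.ofReal (ρ y x)) = 0 := by
      rcases mul_eq_zero.1 hy with h | h
      · exact absurd h (by simp [ENNReal.ofReal_eq_zero, not_le, hwpos])
      · exact h
    have hρ0 : ∀ᵐ x ∂(volume.restrict E), ENNReal.ofReal (ρ y x) = 0 :=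
      (lintegral_eq_zero_iff
        ((hA.ρ_meas.comp (measurable_const.prodMk measurable_id)).ennreal_ofReal)).1 hQ
    have hρ0' : ∀ᵐ x ∂(volume.restrict E), ρ y x = 0 :=
      hρ0.mono fun x hx =>
        le_antisymm (by simpa [ENNReal.ofReal_eq_zero] using hx) (hA.ρ_nonneg y x)
    have hρint0 : ∫ x in E, ρ y x = 0 := by
      rw [integral_congr_ae (g := fun _ => (0:ℝ)) hρ0', integral_zero]
    exact absurd hρint0 (ne_of_gt (hA.ρ_push_pos Λ y hyE))
  have hfin : (1:ℝ) = 0 := by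
    rw [← hwsum, integral_congr_ae (g := fun _ => (0:ℝ)) hwzero, integral_zero]
  norm_num at hfin

end fbpcore2
section fbpmeas

variable {d : ℕ} {F : Vec d → ℝ} {ρ : Vec d → Vec d → ℝ} {u₀ : Vec d → ℝ} {lam₀ : ℝ}
  {u : Vec d → ℝ → ℝ} {ℓ : ℝ → ℝ}

lemma fbpRf_pos (n : ℕ) (σ : ℝ) : 0 < fbpRf n σ := by
  unfold fbpRf
  have h1 : (0:ℝ) ≤ ((max ⌊σ * (n + 1)⌋ 0 : ℤ) : ℝ) := by exact_mod_cast le_max_right _ 0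
  have h2 : (0:ℝ) < n + 1 := by positivity
  exact div_pos (by linarith) h2

/-- Composition with a measurable countable-range map. -/
lemma fbp_meas_comp_cr {g : ℝ → ℝ} (hg : Measurable g) (hcr : (Set.range g).Countable)
    (f : ℝ → ℝ) : Measurable fun σ => f (g σ) := by
  intro B _
  have hset : (fun σ => f (g σ)) ⁻¹' B = ⋃ q ∈ Set.range g ∩ f ⁻¹' B, g ⁻¹' {q} := by
    ext σ
    simp only [mem_preimage, mem_iUnion, mem_inter_iff, mem_range, mem_singleton_iff,
      exists_prop]
    constructor
    · intro h; exact ⟨g σ, ⟨⟨σ, rfl⟩, h⟩, rfl⟩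
    · rintro ⟨q, ⟨_, hq⟩, h2⟩; rw [h2]; exact hq
  rw [hset]
  exact MeasurableSet.biUnion (hcr.mono inter_subset_left)
    fun q _ => hg (measurableSet_singleton q)

lemma fbp_ellt_meas (hsol : IsFBPSolution d F ρ u₀ lam₀ u ℓ) :
    Measurable fun σ : ℝ => if 0 < σ then ℓ σ else lam₀ := by
  have hgm : ∀ n : ℕ, Measurable fun σ : ℝ => if 0 < σ then ℓ (fbpRf n σ) else lam₀ :=
    fun n => Measurable.ite measurableSet_Ioi
      (fbp_meas_comp_cr (fbpRf_measurable n) (fbpRf_range_countable n) ℓ) measurable_const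
  refine measurable_of_tendsto_metrizable hgm ?_
  rw [tendsto_pi_nhds]
  intro σ
  by_cases hσ : 0 < σ
  · simp only [hσ, if_true]
    have hc : ContinuousWithinAt ℓ (Ici σ) σ := hsol.ℓ_rc σ hσ.le
    have ht : Tendsto (fun n => fbpRf n σ) atTop (𝓝[Ici σ] σ) := by
      refine tendsto_nhdsWithin_of_tendsto_nhds_of_eventually_within _ (fbpRf_tendsto hσ) ?_
      exact Eventually.of_forall fun n => (fbpRf_gt hσ n).le
    exact hc.tendsto.comp ht
  · simp only [hσ, if_false]
    exact tendsto_const_nhds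

/-- Jointly measurable version of `u`, exact at positive times. -/
def fbpU (F : Vec d → ℝ) (u : Vec d → ℝ → ℝ) (ℓ : ℝ → ℝ) (p : Vec d × ℝ) : ℝ :=
  if 0 < p.2 ∧ ℓ p.2 < F p.1 then u p.1 p.2 else 0

lemma fbp_U_meas (hA : AssumptionA d F ρ u₀ lam₀) (hsol : IsFBPSolution d F ρ u₀ lam₀ u ℓ) :
    Measurable (fbpU F u ℓ) := by
  have hcond : MeasurableSet {p : Vec d × ℝ | 0 < p.2 ∧ ℓ p.2 < F p.1} := by
    have h1 : MeasurableSet {p : Vec d × ℝ | 0 < p.2} := measurable_snd measurableSet_Ioi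
    have h2 : MeasurableSet {p : Vec d × ℝ | (if 0 < p.2 then ℓ p.2 else lam₀) < F p.1} :=
      measurableSet_lt ((fbp_ellt_meas hsol).comp measurable_snd)
        (hA.F_cont.measurable.comp measurable_fst)
    have heq : {p : Vec d × ℝ | 0 < p.2 ∧ ℓ p.2 < F p.1}
        = {p : Vec d × ℝ | 0 < p.2} ∩ {p | (if 0 < p.2 then ℓ p.2 else lam₀) < F p.1} := by
      ext p
      simp only [mem_setOf_eq, mem_inter_iff]
      constructor
      · rintro ⟨hp1, hp2⟩; exact ⟨hp1, by rw [if_pos hp1]; exact hp2⟩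
      · rintro ⟨hp1, hp2⟩; rw [if_pos hp1] at hp2; exact ⟨hp1, hp2⟩
    rw [heq]; exact h1.inter h2
  have happrox : ∀ n : ℕ, Measurable fun p : Vec d × ℝ =>
      if 0 < p.2 ∧ ℓ p.2 < F p.1 then u p.1 (fbpRf n p.2) else 0 := by
    intro n
    refine Measurable.ite hcond ?_ measurable_const
    refine fbp_meas_comp_cr_prod (fbpRf_measurable n) (fbpRf_range_countable n) u ?_
    intro q hq
    obtain ⟨σ, rfl⟩ := hq
    exact hsol.u_meas _ (fbpRf_pos n σ).le
  refine measurable_of_tendsto_metrizable happrox ?_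
  rw [tendsto_pi_nhds]
  intro p
  by_cases hp : 0 < p.2 ∧ ℓ p.2 < F p.1
  · simp only [fbpU, hp, if_true]
    have hcont : ContinuousAt (fun s => u p.1 s) p.2 :=
      (hsol.pde p.1 p.2 hp.1 hp.2).continuousAt
    exact hcont.tendsto.comp (fbpRf_tendsto hp.1)
  · simp only [fbpU, hp, if_false]
    exact tendsto_const_nhds

lemma fbp_U_eq (hsol : IsFBPSolution d F ρ u₀ lam₀ u ℓ) {x : Vec d} {σ : ℝ} (hσ : 0 < σ) :
    fbpU F u ℓ (x, σ) = u x σ := by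
  unfold fbpU
  by_cases h : ℓ σ < F x
  · simp [hσ, h]
  · simp only [hσ, h, and_false, if_false]
    exact (hsol.vanish x σ hσ (not_lt.1 h)).symm

lemma fbp_U_nonneg (hsol : IsFBPSolution d F ρ u₀ lam₀ u ℓ) (p : Vec d × ℝ) :
    0 ≤ fbpU F u ℓ p := by
  unfold fbpU
  split
  · next h => exact hsol.u_nonneg p.1 p.2 h.1.le
  · exact le_rfl

/-- Jointly measurable version of the flux. -/
def fbpPhi (F : Vec d → ℝ) (ρ : Vec d → Vec d → ℝ) (u : Vec d → ℝ → ℝ) (ℓ : ℝ → ℝ)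
    (q : Vec d × ℝ) : ℝ := ∫ y, fbpU F u ℓ (y, q.2) * ρ y q.1

lemma fbp_Phi_meas (hA : AssumptionA d F ρ u₀ lam₀) (hsol : IsFBPSolution d F ρ u₀ lam₀ u ℓ) :
    Measurable (fbpPhi F ρ u ℓ) := by
  have h1 : Measurable fun z : (Vec d × ℝ) × Vec d => fbpU F u ℓ (z.2, z.1.2) * ρ z.2 z.1.1 := by
    refine Measurable.mul ?_ ?_
    · exact (fbp_U_meas hA hsol).comp
        (measurable_snd.prodMk (measurable_snd.comp measurable_fst))
    · exact hA.ρ_meas.comp (measurable_snd.prodMk (measurable_fst.comp measurable_fst))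
  exact h1.stronglyMeasurable.integral_prod_right'.measurable

lemma fbp_Phi_eq (hsol : IsFBPSolution d F ρ u₀ lam₀ u ℓ) {x : Vec d} {σ : ℝ} (hσ : 0 < σ) :
    fbpPhi F ρ u ℓ (x, σ) = ∫ y, u y σ * ρ y x := by
  unfold fbpPhi
  exact integral_congr_ae (Eventually.of_forall fun y => by
    simp only []
    rw [fbp_U_eq hsol hσ])

lemma fbp_Phi_nonneg (hA : AssumptionA d F ρ u₀ lam₀) (hsol : IsFBPSolution d F ρ u₀ lam₀ u ℓ)
    (q : Vec d × ℝ) : 0 ≤ fbpPhi F ρ u ℓ q :=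
  integral_nonneg fun y => mul_nonneg (fbp_U_nonneg hsol _) (hA.ρ_nonneg y q.1)

lemma fbp_Phi_integrableOn (hA : AssumptionA d F ρ u₀ lam₀)
    (hsol : IsFBPSolution d F ρ u₀ lam₀ u ℓ) (x : Vec d) {T : ℝ} (hT : 0 < T) :
    IntegrableOn (fun σ => fbpPhi F ρ u ℓ (x, σ)) (Ioc 0 T) := by
  obtain ⟨K, hK0, hK⟩ := fbp_flux_bound hA hsol hT
  refine Integrable.mono' (g := fun _ => K) (integrableOn_const measure_Ioc_lt_top.ne)
    (((fbp_Phi_meas hA hsol).comp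
      (measurable_const.prodMk measurable_id)).aestronglyMeasurable.restrict) ?_
  refine (ae_restrict_iff' measurableSet_Ioc).2 (Eventually.of_forall fun σ hσ => ?_)
  rw [Real.norm_eq_abs, abs_of_nonneg (fbp_Phi_nonneg hA hsol _), fbp_Phi_eq hsol hσ.1]
  exact hK x σ ⟨hσ.1.le, hσ.2⟩

end fbpmeas
section fbpzero

variable {d : ℕ} {F : Vec d → ℝ} {ρ : Vec d → Vec d → ℝ} {u₀ : Vec d → ℝ} {lam₀ : ℝ}
  {u : Vec d → ℝ → ℝ} {ℓ : ℝ → ℝ}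

/-- Below `lam₀`, the density at time `θ₀` is bounded by the accumulated influx. -/
lemma fbp_ubound (hA : AssumptionA d F ρ u₀ lam₀) (hsol : IsFBPSolution d F ρ u₀ lam₀ u ℓ)
    {t : ℝ} (hbd : ∀ θ ∈ Icc (0:ℝ) t, ℓ θ ≤ lam₀) {θ₀ : ℝ} (hθ₀ : 0 < θ₀) (hθt : θ₀ ≤ t)
    {x : Vec d} (hx : F x < lam₀) :
    u x θ₀ ≤ ∫ σ in Ioc 0 θ₀, fbpPhi F ρ u ℓ (x, σ) := by
  have hHnn : 0 ≤ ∫ σ in Ioc 0 θ₀, fbpPhi F ρ u ℓ (x, σ) :=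
    setIntegral_nonneg measurableSet_Ioc fun σ _ => fbp_Phi_nonneg hA hsol _
  set A : Set ℝ := {σ | σ ∈ Ioc (0:ℝ) θ₀ ∧ F x ≤ ℓ σ} with hAdef
  have hAne : A.Nonempty := by
    have hrc : Tendsto ℓ (𝓝[>] (0:ℝ)) (𝓝 lam₀) := by
      have h1 : Tendsto ℓ (𝓝[Ici (0:ℝ)] 0) (𝓝 (ℓ 0)) := hsol.ℓ_rc 0 le_rfl
      rw [hsol.init_ℓ] at h1
      exact h1.mono_left (nhdsWithin_mono _ Ioi_subset_Ici_self)
    have h1 : ∀ᶠ σ in 𝓝[>] (0:ℝ), F x < ℓ σ := hrc (Ioi_mem_nhds hx)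
    have h2 : ∀ᶠ σ in 𝓝[>] (0:ℝ), σ ∈ Ioc (0:ℝ) θ₀ :=
      Ioc_mem_nhdsGT_of_mem ⟨le_rfl, hθ₀⟩
    obtain ⟨σ₀, hσ₀1, hσ₀2⟩ := (h1.and h2).exists
    exact ⟨σ₀, hσ₀2, hσ₀1.le⟩
  have hbdd : BddAbove A := ⟨θ₀, fun σ hσ => hσ.1.2⟩
  set τ := sSup A with hτdef
  obtain ⟨σ₀, hσ₀⟩ := hAne
  have hτ0 : 0 < τ := lt_of_lt_of_le hσ₀.1.1 (le_csSup hbdd hσ₀)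
  have hτθ : τ ≤ θ₀ := csSup_le ⟨σ₀, hσ₀⟩ fun σ hσ => hσ.1.2
  have hK2 : ∀ σ, τ < σ → σ ≤ θ₀ → ℓ σ < F x := by
    intro σ h1 h2
    by_contra hcon
    push_neg at hcon
    exact absurd (le_csSup hbdd ⟨⟨hτ0.trans h1, h2⟩, hcon⟩) (not_le.2 h1)
  by_cases hτA : F x ≤ ℓ τ
  · rcases eq_or_lt_of_le hτθ with heq | hlt
    · have hz : u x θ₀ = 0 := hsol.vanish x θ₀ hθ₀ (heq ▸ hτA)
      rw [hz]; exact hHnn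
    · exact (fbp_core hA hsol hτ0 hlt
        (fun σ hσ => by
          rcases eq_or_lt_of_le hσ.1 with h | h
          · rw [← h]
          · exact ((hK2 σ h hσ.2).le).trans hτA)
        (fbp_massE hA hsol hτ0)).elim
  · push_neg at hτA
    have hclus : τ ∈ closure A := csSup_mem_closure ⟨σ₀, hσ₀⟩ hbdd
    have hnb : (𝓝[A] τ).NeBot := mem_closure_iff_nhdsWithin_neBot.1 hclus
    have hcont : ContinuousAt (fun s => u x s) τ := (hsol.pde x τ hτ0 hτA).continuousAt
    have h01 : Tendsto (fun s => u x s) (𝓝[A] τ) (𝓝 (u x τ)) :=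
      hcont.continuousWithinAt
    have h02 : Tendsto (fun s => u x s) (𝓝[A] τ) (𝓝 0) := by
      have hzero : ∀ σ ∈ A, u x σ = 0 := fun σ hσ => hsol.vanish x σ hσ.1.1 hσ.2
      refine Tendsto.congr' ?_ tendsto_const_nhds
      filter_upwards [eventually_mem_nhdsWithin] with σ hσ
      exact (hzero σ hσ).symm
    have huτ : u x τ = 0 := tendsto_nhds_unique h01 h02
    rcases eq_or_lt_of_le hτθ with heq | hlt
    · have hz : u x θ₀ = 0 := heq ▸ huτ
      rw [hz]; exact hHnn
    · have hcov : ∀ σ ∈ Icc τ θ₀, ℓ σ < F x := by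
        intro σ hσ
        rcases eq_or_lt_of_le hσ.1 with h | h
        · rw [← h]; exact hτA
        · exact hK2 σ h hσ.2
      have hftc := fbp_ftc hsol hτ0 hlt.le hcov
      rw [hftc, huτ, zero_add]
      have hcongr : ∫ σ in Ioc τ θ₀, (∫ y, u y σ * ρ y x)
          = ∫ σ in Ioc τ θ₀, fbpPhi F ρ u ℓ (x, σ) := by
        refine setIntegral_congr_fun measurableSet_Ioc fun σ hσ => ?_
        exact (fbp_Phi_eq hsol (hτ0.trans hσ.1)).symm
      rw [hcongr]
      refine setIntegral_mono_set (fbp_Phi_integrableOn hA hsol x hθ₀) ?_ ?_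
      · exact (ae_restrict_iff' measurableSet_Ioc).2
          (Eventually.of_forall fun σ _ => fbp_Phi_nonneg hA hsol _)
      · exact HasSubset.Subset.eventuallyLE (Ioc_subset_Ioc_left hτ0.le)

/-- The mass strictly below `lam₀` at time `θ₀` is at most `θ₀`. -/
lemma fbp_massN (hA : AssumptionA d F ρ u₀ lam₀) (hsol : IsFBPSolution d F ρ u₀ lam₀ u ℓ)
    {t : ℝ} (hbd : ∀ θ ∈ Icc (0:ℝ) t, ℓ θ ≤ lam₀) {θ₀ : ℝ} (hθ₀ : 0 < θ₀) (hθt : θ₀ ≤ t) :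
    ∫ x in F ⁻¹' Iio lam₀, u x θ₀ ≤ θ₀ := by
  set N : Set (Vec d) := F ⁻¹' Iio lam₀ with hNdef
  have hN : MeasurableSet N := hA.F_cont.measurable measurableSet_Iio
  have hchain : ∫⁻ x in N, ENNReal.ofReal (u x θ₀) ≤ ENNReal.ofReal θ₀ := by
    have step1 : ∫⁻ x in N, ENNReal.ofReal (u x θ₀)
        ≤ ∫⁻ x in N, ENNReal.ofReal (∫ σ in Ioc 0 θ₀, fbpPhi F ρ u ℓ (x, σ)) := by
      refine lintegral_mono_ae ?_
      refine (ae_restrict_iff' hN).2 (Eventually.of_forall fun x hx => ?_)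
      exact ENNReal.ofReal_le_ofReal (fbp_ubound hA hsol hbd hθ₀ hθt hx)
    have step2 : ∀ x : Vec d, ENNReal.ofReal (∫ σ in Ioc 0 θ₀, fbpPhi F ρ u ℓ (x, σ))
        = ∫⁻ σ in Ioc 0 θ₀, ENNReal.ofReal (fbpPhi F ρ u ℓ (x, σ)) := by
      intro x
      exact ofReal_integral_eq_lintegral_ofReal (fbp_Phi_integrableOn hA hsol x hθ₀)
        ((ae_restrict_iff' measurableSet_Ioc).2
          (Eventually.of_forall fun σ _ => fbp_Phi_nonneg hA hsol _))
    have step3 : ∫⁻ x in N, ∫⁻ σ in Ioc 0 θ₀, ENNReal.ofReal (fbpPhi F ρ u ℓ (x, σ))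
        = ∫⁻ σ in Ioc 0 θ₀, ∫⁻ x in N, ENNReal.ofReal (fbpPhi F ρ u ℓ (x, σ)) :=
      lintegral_lintegral_swap ((fbp_Phi_meas hA hsol).ennreal_ofReal).aemeasurable
    have step4 : ∀ σ ∈ Ioc (0:ℝ) θ₀,
        (∫⁻ x in N, ENNReal.ofReal (fbpPhi F ρ u ℓ (x, σ))) ≤ 1 := by
      intro σ hσ
      have hσ0 : 0 < σ := hσ.1
      have hσt : σ ≤ t := hσ.2.trans hθt
      obtain ⟨C, hC⟩ := hsol.u_bdd t (hθ₀.trans_le hθt)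
      have hint : ∀ z : Vec d, Integrable fun y => u y σ * ρ y z := fun z =>
        fbp_integrable_mul_rho hA (hsol.u_meas σ hσ0.le) (fun y => hsol.u_nonneg y σ hσ0.le)
          (fun y => hC y σ ⟨hσ0.le, hσt⟩) z
      have e1 : ∀ z : Vec d, ENNReal.ofReal (fbpPhi F ρ u ℓ (z, σ))
          = ∫⁻ y, ENNReal.ofReal (u y σ) * ENNReal.ofReal (ρ y z) := by
        intro z
        rw [fbp_Phi_eq hsol hσ0, ofReal_integral_eq_lintegral_ofReal (hint z)
          (Eventually.of_forall fun y => mul_nonneg (hsol.u_nonneg y σ hσ0.le)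
            (hA.ρ_nonneg y z))]
        exact lintegral_congr fun y => ENNReal.ofReal_mul (hsol.u_nonneg y σ hσ0.le)
      calc ∫⁻ x in N, ENNReal.ofReal (fbpPhi F ρ u ℓ (x, σ))
          = ∫⁻ x in N, ∫⁻ y, ENNReal.ofReal (u y σ) * ENNReal.ofReal (ρ y x) :=
            lintegral_congr fun z => e1 z
        _ = ∫⁻ y, ∫⁻ x in N, ENNReal.ofReal (u y σ) * ENNReal.ofReal (ρ y x) := by
            refine lintegral_lintegral_swap ?_
            exact (((hsol.u_meas σ hσ0.le).comp measurable_snd).ennreal_ofReal.mul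
              ((hA.ρ_meas.comp (measurable_snd.prodMk measurable_fst)).ennreal_ofReal)).aemeasurable
        _ = ∫⁻ y, ENNReal.ofReal (u y σ) * ∫⁻ x in N, ENNReal.ofReal (ρ y x) := by
            refine lintegral_congr fun y => ?_
            exact lintegral_const_mul _
              ((hA.ρ_meas.comp (measurable_const.prodMk measurable_id)).ennreal_ofReal)
        _ ≤ ∫⁻ y, ENNReal.ofReal (u y σ) * 1 := by
            refine lintegral_mono fun y => ?_
            refine mul_le_mul_right ?_ _
            have hle : ∫⁻ x in N, ENNReal.ofReal (ρ y x) ≤ ∫⁻ x, ENNReal.ofReal (ρ y x) :=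
              lintegral_mono' Measure.restrict_le_self le_rfl
            have heq : ∫⁻ x, ENNReal.ofReal (ρ y x) = 1 := by
              rw [← ofReal_integral_eq_lintegral_ofReal (hA.ρ_int y)
                (Eventually.of_forall fun z => hA.ρ_nonneg y z), hA.ρ_prob y,
                ENNReal.ofReal_one]
            rw [heq] at hle; exact hle
        _ = 1 := by
            simp only [mul_one]
            rw [← ofReal_integral_eq_lintegral_ofReal (fbp_integrable_u hsol hσ0)
              (Eventually.of_forall fun y => hsol.u_nonneg y σ hσ0.le), hsol.mass σ hσ0,
              ENNReal.ofReal_one]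
    calc ∫⁻ x in N, ENNReal.ofReal (u x θ₀)
        ≤ ∫⁻ x in N, ∫⁻ σ in Ioc 0 θ₀, ENNReal.ofReal (fbpPhi F ρ u ℓ (x, σ)) :=
          step1.trans (le_of_eq (lintegral_congr fun x => step2 x))
      _ = ∫⁻ σ in Ioc 0 θ₀, ∫⁻ x in N, ENNReal.ofReal (fbpPhi F ρ u ℓ (x, σ)) := step3
      _ ≤ ∫⁻ σ in Ioc 0 θ₀, 1 :=
          lintegral_mono_ae ((ae_restrict_iff' measurableSet_Ioc).2
            (Eventually.of_forall fun σ hσ => step4 σ hσ))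
      _ = ENNReal.ofReal θ₀ := by
          rw [lintegral_one, Measure.restrict_apply_univ, Real.volume_Ioc, sub_zero]
  have hmeas : AEStronglyMeasurable (fun x => u x θ₀) (volume.restrict N) :=
    (hsol.u_meas θ₀ hθ₀.le).aestronglyMeasurable.restrict
  have hreal : ∫ x in N, u x θ₀ = (∫⁻ x in N, ENNReal.ofReal (u x θ₀)).toReal :=
    integral_eq_lintegral_of_nonneg_ae
      (Eventually.of_forall fun x => hsol.u_nonneg x θ₀ hθ₀.le) hmeas
  rw [hreal]
  calc (∫⁻ x in N, ENNReal.ofReal (u x θ₀)).toReal ≤ (ENNReal.ofReal θ₀).toReal :=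
        ENNReal.toReal_mono ENNReal.ofReal_ne_top hchain
    _ = θ₀ := ENNReal.toReal_ofReal hθ₀.le

/-- In the `s = 0` regime the whole mass sits above `lam₀` at every positive time `≤ t`. -/
lemma fbp_GEone (hA : AssumptionA d F ρ u₀ lam₀) (hsol : IsFBPSolution d F ρ u₀ lam₀ u ℓ)
    {t : ℝ} (hbd : ∀ θ ∈ Icc (0:ℝ) t, ℓ θ ≤ lam₀) {θ₀ : ℝ} (hθ₀ : 0 < θ₀) (hθt : θ₀ ≤ t) :
    ∫ x in F ⁻¹' Ioi lam₀, u x θ₀ = 1 := by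
  set E : Set (Vec d) := F ⁻¹' Ioi lam₀ with hEdef
  have hE : MeasurableSet E := hA.F_cont.measurable measurableSet_Ioi
  set N : Set (Vec d) := F ⁻¹' Iio lam₀ with hNdef
  have hsplit : ∀ θ : ℝ, 0 < θ → (∫ x in E, u x θ) + (∫ x in N, u x θ) = 1 := by
    intro θ hθ
    have h1 := integral_add_compl hE (fbp_integrable_u hsol hθ)
    have h2 : ∫ x in Eᶜ, u x θ = ∫ x in N, u x θ := by
      refine setIntegral_congr_set ?_
      rw [ae_eq_set]
      constructor
      · refine measure_mono_null ?_ (hA.F_level_null lam₀)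
        intro x hx
        have hx1 : ¬ lam₀ < F x := hx.1
        have hx2 : ¬ F x < lam₀ := hx.2
        exact le_antisymm (not_lt.1 hx1) (not_lt.1 hx2)
      · refine measure_mono_null ?_ (hA.F_level_null lam₀)
        intro x hx
        have hxE : x ∈ E := not_not.1 hx.2
        have h1 : F x < lam₀ := hx.1
        have h2 : lam₀ < F x := hxE
        exact absurd (lt_trans h1 h2) (lt_irrefl _)
    calc (∫ x in E, u x θ) + (∫ x in N, u x θ)
        = (∫ x in E, u x θ) + (∫ x in Eᶜ, u x θ) := by rw [h2]
      _ = ∫ x, u x θ := h1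
      _ = 1 := hsol.mass θ hθ
  have hmono : ∀ a b : ℝ, 0 < a → a ≤ b → b ≤ t →
      (∫ x in E, u x a) ≤ ∫ x in E, u x b := by
    intro a b ha hab hbt
    refine setIntegral_mono_on (fbp_integrable_u hsol ha).integrableOn
      (fbp_integrable_u hsol (ha.trans_le hab)).integrableOn hE fun x hx => ?_
    exact fbp_umono hA hsol ha hab fun σ hσ =>
      lt_of_le_of_lt (hbd σ ⟨ha.le.trans hσ.1, hσ.2.trans hbt⟩) hx
  have hup : (∫ x in E, u x θ₀) ≤ 1 := by
    rw [← hsol.mass θ₀ hθ₀]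
    exact setIntegral_le_integral (fbp_integrable_u hsol hθ₀)
      (Eventually.of_forall fun x => hsol.u_nonneg x θ₀ hθ₀.le)
  have hlow : ∀ ε : ℝ, 0 < ε → ε ≤ θ₀ → 1 - ε ≤ ∫ x in E, u x θ₀ := by
    intro ε hε hεθ
    have hNle := fbp_massN hA hsol hbd hε (hεθ.trans hθt)
    have hsp := hsplit ε hε
    have hmn := hmono ε θ₀ hε hεθ hθt
    linarith
  by_contra hne
  have hlt : (∫ x in E, u x θ₀) < 1 := lt_of_le_of_ne hup hne
  have hε1 : (0:ℝ) < min θ₀ ((1 - ∫ x in E, u x θ₀) / 2) := lt_min hθ₀ (by linarith)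
  have hl2 := hlow _ hε1 (min_le_left _ _)
  have h2 : min θ₀ ((1 - ∫ x in E, u x θ₀) / 2) ≤ (1 - ∫ x in E, u x θ₀) / 2 :=
    min_le_right _ _
  linarith

end fbpzero
/-- There are no times `0 ≤ s < t` such that `ℓ θ ≤ ℓ s` for all `θ ∈ [0, t]`;
equivalently, for all `0 ≤ s < t` one has `sup_{θ ∈ [0,t]} ℓ θ > ℓ s`. -/
theorem fbp_boundary_strictly_advances {d : ℕ} (F : Vec d → ℝ) (ρ : Vec d → Vec d → ℝ)
    (u₀ : Vec d → ℝ) (lam₀ : ℝ) (hA : AssumptionA d F ρ u₀ lam₀)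
    (u : Vec d → ℝ → ℝ) (ℓ : ℝ → ℝ) (hsol : IsFBPSolution d F ρ u₀ lam₀ u ℓ) :
    (¬ ∃ s t : ℝ, 0 ≤ s ∧ s < t ∧ ∀ θ ∈ Icc (0:ℝ) t, ℓ θ ≤ ℓ s) ∧
    (∀ s t : ℝ, 0 ≤ s → s < t → ∃ θ ∈ Icc (0:ℝ) t, ℓ s < ℓ θ) := by
  have main : ¬ ∃ s t : ℝ, 0 ≤ s ∧ s < t ∧ ∀ θ ∈ Icc (0:ℝ) t, ℓ θ ≤ ℓ s := by
    rintro ⟨s, t, hs0, hst, hbound⟩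
    rcases eq_or_lt_of_le hs0 with heq | hpos
    · -- s = 0
      have ht0 : 0 < t := heq ▸ hst
      have hbd : ∀ θ ∈ Icc (0:ℝ) t, ℓ θ ≤ lam₀ := by
        intro θ hθ
        have hb := hbound θ hθ
        rw [← heq, hsol.init_ℓ] at hb
        exact hb
      have hhalf1 : 0 < t / 2 := by linarith
      have hhalf2 : t / 2 < t := by linarith
      exact fbp_core hA hsol hhalf1 hhalf2
        (fun σ hσ => hbd σ ⟨hhalf1.le.trans hσ.1, hσ.2⟩)
        (fbp_GEone hA hsol hbd hhalf1 hhalf2.le)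
    · exact fbp_core hA hsol hpos hst
        (fun σ hσ => hbound σ ⟨hs0.trans hσ.1, hσ.2⟩)
        (fbp_massE hA hsol hpos)
  refine ⟨main, fun s t hs0 hst => ?_⟩
  by_contra hc
  push_neg at hc
  exact main ⟨s, t, hs0, hst, hc⟩
end
end

section
/- Under Assumption A, if (u,ℓ) and (u,m) are both solutions of the free boundary problem (FBP) with the same density component u, then ℓ_t = m_t for all t ≥ 0. -/
open MeasureTheory Set Filter Topology

noncomputable section

private lemma fbp_not_lt {d : ℕ} {F : Vec d → ℝ} {ρ : Vec d → Vec d → ℝ}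
    {u₀ : Vec d → ℝ} {lam₀ : ℝ} (hA : AssumptionA d F ρ u₀ lam₀)
    {u : Vec d → ℝ → ℝ} {ℓ m : ℝ → ℝ}
    (hℓ : IsFBPSolution d F ρ u₀ lam₀ u ℓ) (hm : IsFBPSolution d F ρ u₀ lam₀ u m)
    (t : ℝ) (ht : 0 < t) : ¬ ℓ t < m t := by
  intro hlt
  set c : ℝ := (ℓ t + m t) / 2 with hc
  have hc1 : ℓ t < c := by simp only [hc]; linarith
  have hc2 : c < m t := by simp only [hc]; linarith
  -- find an interval [t, b] on which ℓ < c < m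
  have hev : ∀ᶠ s in 𝓝[Set.Ici t] t, ℓ s < c ∧ c < m s :=
    ((hℓ.ℓ_rc t ht.le).eventually_lt_const hc1).and
      ((hm.ℓ_rc t ht.le).eventually_const_lt hc2)
  rw [Filter.Eventually, mem_nhdsGE_iff_exists_Ico_subset] at hev
  obtain ⟨b', hb', hsub⟩ := hev
  set b : ℝ := (t + b') / 2 with hbdef
  have htb : t < b := by simp only [hbdef]; simp only [Set.mem_Ioi] at hb'; linarith
  have hbb' : b < b' := by simp only [hbdef]; simp only [Set.mem_Ioi] at hb'; linarith
  have hb0 : 0 < b := ht.trans htb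
  have hIcc : ∀ s ∈ Set.Icc t b, ℓ s < c ∧ c < m s := fun s hs =>
    hsub ⟨hs.1, lt_of_le_of_lt hs.2 hbb'⟩
  -- s₀ : midpoint
  set s₀ : ℝ := (t + b) / 2 with hs₀def
  have hs₀mem : s₀ ∈ Set.Ioo t b := by constructor <;> (simp only [hs₀def]; linarith)
  have hs₀Icc : s₀ ∈ Set.Icc t b := Set.Ioo_subset_Icc_self hs₀mem
  have hs₀0 : 0 < s₀ := ht.trans hs₀mem.1
  -- vanishing below c on [t, b]
  have hvan : ∀ x, F x ≤ c → ∀ s ∈ Set.Icc t b, u x s = 0 := fun x hx s hs =>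
    hm.vanish x s (ht.trans_le hs.1) (hx.trans (hIcc s hs).2.le)
  -- derivative above c on [t, b]
  have hderiv : ∀ x, c < F x → ∀ s ∈ Set.Icc t b,
      HasDerivAt (fun s => u x s) (∫ y, u y s * ρ y x) s := fun x hx s hs =>
    hℓ.pde x s (ht.trans_le hs.1) ((hIcc s hs).1.trans hx)
  have hDnn : ∀ x, ∀ s : ℝ, 0 < s → 0 ≤ ∫ y, u y s * ρ y x := fun x s hs =>
    integral_nonneg fun y => mul_nonneg (hℓ.u_nonneg y s hs.le) (hA.ρ_nonneg y x)
  -- monotonicity on [t, b] for x above c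
  have hmono : ∀ x, c < F x → MonotoneOn (fun s => u x s) (Set.Icc t b) := by
    intro x hx
    refine monotoneOn_of_deriv_nonneg (convex_Icc t b)
      (fun s hs => (hderiv x hx s hs).continuousAt.continuousWithinAt)
      (fun s hs => by
        rw [interior_Icc] at hs
        exact (hderiv x hx s (Set.Ioo_subset_Icc_self hs)).differentiableAt.differentiableWithinAt)
      (fun s hs => by
        rw [interior_Icc] at hs
        rw [(hderiv x hx s (Set.Ioo_subset_Icc_self hs)).deriv]
        exact hDnn x s (ht.trans hs.1))
  have hub : ∀ x, u x t ≤ u x b := by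
    intro x
    rcases le_or_gt (F x) c with hx | hx
    · rw [hvan x hx t (Set.left_mem_Icc.2 htb.le), hvan x hx b (Set.right_mem_Icc.2 htb.le)]
    · exact hmono x hx (Set.left_mem_Icc.2 htb.le) (Set.right_mem_Icc.2 htb.le) htb.le
  -- integrability of u(·,s) for s > 0
  have hint_u : ∀ s : ℝ, 0 < s → Integrable (fun x => u x s) := by
    intro s hs
    by_contra h
    have := hℓ.mass s hs
    rw [integral_undef h] at this
    norm_num at this
  -- a.e. equality of u(·,t) and u(·,b)
  have haeEq : (fun x => u x b - u x t) =ᶠ[ae volume] 0 := by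
    have hintt := hint_u t ht
    have hintb := hint_u b hb0
    refine (integral_eq_zero_iff_of_nonneg_ae
      (Filter.Eventually.of_forall fun x => sub_nonneg.2 (hub x)) (hintb.sub hintt)).mp ?_
    rw [integral_sub hintb hintt, hℓ.mass b hb0, hℓ.mass t ht]
    ring
  -- derivative at s₀ vanishes a.e. above c
  have hD0 : ∀ᵐ x ∂(volume : Measure (Vec d)), c < F x → ∫ y, u y s₀ * ρ y x = 0 := by
    filter_upwards [haeEq] with x hx hcx
    have hxbt : u x b = u x t := by
      have : u x b - u x t = 0 := hx
      linarith
    have hconst : ∀ s ∈ Set.Icc t b, u x s = u x t := by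
      intro s hs
      refine le_antisymm ?_ (hmono x hcx (Set.left_mem_Icc.2 htb.le) hs hs.1)
      have h2 := hmono x hcx hs (Set.right_mem_Icc.2 htb.le) hs.2
      linarith [hxbt]
    have hevc : (fun s => u x s) =ᶠ[𝓝 s₀] fun _ => u x t := by
      filter_upwards [Ioo_mem_nhds hs₀mem.1 hs₀mem.2] with s hs
      exact hconst s (Set.Ioo_subset_Icc_self hs)
    have h1 : HasDerivAt (fun s => u x s) (∫ y, u y s₀ * ρ y x) s₀ :=
      hderiv x hcx s₀ hs₀Icc
    have h2 : HasDerivAt (fun s => u x s) 0 s₀ :=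
      (hasDerivAt_const s₀ (u x t)).congr_of_eventuallyEq hevc
    exact h1.unique h2
  -- integrability of y ↦ u y s₀ * ρ y x for each x
  obtain ⟨ρt, cρ, hρt0, hρti, hρt1, hρdom⟩ := hA.ρ_dom
  obtain ⟨C, hC⟩ := hℓ.u_bdd b hb0
  have hC0 : 0 ≤ C :=
    le_trans (hℓ.u_nonneg 0 s₀ hs₀0.le) (hC 0 s₀ ⟨hs₀0.le, hs₀Icc.2⟩)
  have hmeasρx : ∀ x : Vec d, Measurable fun y => ρ y x := fun x =>
    hA.ρ_meas.comp (measurable_id.prodMk measurable_const)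
  have hint : ∀ x : Vec d, Integrable (fun y => u y s₀ * ρ y x) := by
    intro x
    have hmeas : AEStronglyMeasurable (fun y => u y s₀ * ρ y x) volume :=
      ((hℓ.u_meas s₀ hs₀0.le).mul (hmeasρx x)).aestronglyMeasurable
    have hmaj : Integrable (fun y : Vec d => C * (cρ * ρt (x - y))) :=
      (((hρti.comp_sub_left x)).const_mul cρ).const_mul C
    refine hmaj.mono' hmeas (Filter.Eventually.of_forall fun y => ?_)
    rw [Real.norm_eq_abs,
      abs_of_nonneg (mul_nonneg (hℓ.u_nonneg y s₀ hs₀0.le) (hA.ρ_nonneg y x))]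
    exact mul_le_mul (hC y s₀ ⟨hs₀0.le, hs₀Icc.2⟩) (hρdom y x) (hA.ρ_nonneg y x) hC0
  -- set S
  set S : Set (Vec d) := F ⁻¹' Set.Ioi c with hSdef
  have hSmeas : MeasurableSet S := hA.F_cont.measurable measurableSet_Ioi
  -- the double lintegral vanishes
  have hzero : (∫⁻ x in S, ∫⁻ y, ENNReal.ofReal (u y s₀) * ENNReal.ofReal (ρ y x) ∂volume
      ∂volume) = 0 := by
    have h : ∀ᵐ x ∂(volume.restrict S),
        (∫⁻ y, ENNReal.ofReal (u y s₀) * ENNReal.ofReal (ρ y x) ∂volume) = 0 := by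
      rw [ae_restrict_iff' hSmeas]
      filter_upwards [hD0] with x hx hxS
      have hx' : ∫ y, u y s₀ * ρ y x = 0 := hx hxS
      have h1 : (∫⁻ y, ENNReal.ofReal (u y s₀ * ρ y x) ∂volume) = 0 := by
        rw [← ofReal_integral_eq_lintegral_ofReal (hint x)
          (Filter.Eventually.of_forall fun y =>
            mul_nonneg (hℓ.u_nonneg y s₀ hs₀0.le) (hA.ρ_nonneg y x)), hx']
        simp
      rw [← h1]
      exact lintegral_congr fun y => (ENNReal.ofReal_mul (hℓ.u_nonneg y s₀ hs₀0.le)).symm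
    calc (∫⁻ x in S, ∫⁻ y, ENNReal.ofReal (u y s₀) * ENNReal.ofReal (ρ y x) ∂volume ∂volume)
        = ∫⁻ _x in S, 0 ∂volume := lintegral_congr_ae h
      _ = 0 := lintegral_zero
  have hswap := lintegral_lintegral_swap (μ := volume.restrict S) (ν := volume)
    (f := fun x y => ENNReal.ofReal (u y s₀) * ENNReal.ofReal (ρ y x))
    (((ENNReal.measurable_ofReal.comp ((hℓ.u_meas s₀ hs₀0.le).comp measurable_snd)).mul
      (ENNReal.measurable_ofReal.comp
        (hA.ρ_meas.comp (measurable_snd.prodMk measurable_fst)))).aemeasurable)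
  have hG : (∫⁻ y, ∫⁻ x in S, ENNReal.ofReal (u y s₀) * ENNReal.ofReal (ρ y x)
      ∂volume ∂volume) = 0 := hswap.symm.trans hzero
  have hG' : (∫⁻ y, ENNReal.ofReal (u y s₀) *
      (∫⁻ x in S, ENNReal.ofReal (ρ y x) ∂volume) ∂volume) = 0 := by
    rw [← hG]
    exact lintegral_congr fun y =>
      (lintegral_const_mul' (ENNReal.ofReal (u y s₀)) _ ENNReal.ofReal_ne_top).symm
  have hKmeas : Measurable fun y : Vec d =>
      (∫⁻ x in S, ENNReal.ofReal (ρ y x) ∂volume) :=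
    Measurable.lintegral_prod_right (f := fun y x => ENNReal.ofReal (ρ y x))
      (ENNReal.measurable_ofReal.comp hA.ρ_meas)
  have hae2 : (fun y => ENNReal.ofReal (u y s₀) *
      (∫⁻ x in S, ENNReal.ofReal (ρ y x) ∂volume)) =ᶠ[ae volume] 0 :=
    (lintegral_eq_zero_iff
      ((ENNReal.measurable_ofReal.comp (hℓ.u_meas s₀ hs₀0.le)).mul hKmeas)).mp hG'
  -- conclude u(·, s₀) = 0 a.e.
  have hu0 : (fun y => u y s₀) =ᶠ[ae volume] 0 := by
    filter_upwards [hae2] with y hy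
    by_contra h
    have hupos : 0 < u y s₀ := lt_of_le_of_ne (hℓ.u_nonneg y s₀ hs₀0.le) (Ne.symm h)
    have h1 : ENNReal.ofReal (u y s₀) ≠ 0 := by
      simp only [ne_eq, ENNReal.ofReal_eq_zero, not_le]
      exact hupos
    have hK0 : (∫⁻ x in S, ENNReal.ofReal (ρ y x) ∂volume) = 0 := by
      rcases mul_eq_zero.mp hy with h2 | h2
      · exact absurd h2 h1
      · exact h2
    have hρae : ∀ᵐ x ∂(volume.restrict S), ENNReal.ofReal (ρ y x) = 0 :=
      (lintegral_eq_zero_iff (ENNReal.measurable_ofReal.comp (hA.ρ_meas.comp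
        (measurable_const.prodMk measurable_id)))).mp hK0
    have hρ0 : (fun x => ρ y x) =ᶠ[ae (volume.restrict S)] 0 := by
      filter_upwards [hρae] with x hx
      have : ρ y x ≤ 0 := ENNReal.ofReal_eq_zero.mp hx
      exact le_antisymm this (hA.ρ_nonneg y x)
    have hI : ∫ x in S, ρ y x ∂volume = 0 := integral_eq_zero_of_ae hρ0
    -- but ρ pushes mass above c
    have hFy : c < F y := by
      by_contra hFy
      push_neg at hFy
      have := hm.vanish y s₀ hs₀0 (hFy.trans (hIcc s₀ hs₀Icc).2.le)
      exact absurd this (ne_of_gt hupos)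
    have := hA.ρ_push_pos c y hFy
    rw [hI] at this
    norm_num at this
  have h1 : (1 : ℝ) = 0 := by
    rw [← hℓ.mass s₀ hs₀0, integral_congr_ae hu0]; simp
  norm_num at h1

/-- Two FBP solutions sharing the same density component have the same boundary. -/
theorem fbp_boundary_determined_by_density {d : ℕ} (F : Vec d → ℝ) (ρ : Vec d → Vec d → ℝ)
    (u₀ : Vec d → ℝ) (lam₀ : ℝ) (hA : AssumptionA d F ρ u₀ lam₀)
    (u : Vec d → ℝ → ℝ) (ℓ m : ℝ → ℝ)
    (hℓ : IsFBPSolution d F ρ u₀ lam₀ u ℓ) (hm : IsFBPSolution d F ρ u₀ lam₀ u m) :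
    ∀ t : ℝ, 0 ≤ t → ℓ t = m t := by
  intro t ht
  rcases ht.eq_or_lt with h0 | h0
  · rw [← h0, hℓ.init_ℓ, hm.init_ℓ]
  · exact le_antisymm (not_lt.mp (fbp_not_lt hA hm hℓ t h0))
      (not_lt.mp (fbp_not_lt hA hℓ hm t h0))
end
end

section
/- Let T > 0, J ∈ ℕ, δ = T/J, and t_j = jδ for j = 0,…,J−1. Let k, m : [0,T) → ℝ be nondecreasing right-continuous functions that are constant on each interval [t_j, t_{j+1}), with values a_j(k) = k(t_j) and a_j(m) = m(t_j). Let F : ℝ^d → ℝ be continuous with Lebesgue-null level sets, let ρ : ℝ^d × ℝ^d → [0,∞) be measurable with ρ(x,·) a probability density for each x, and let z : ℝ^d → [0,∞) be integrable. Suppose w, v : ℝ^d × [0,T) → [0,∞) are measurable functions satisfying: w(x,t) ≤ z(x) and v(x,t) ≤ z(x) for all (x,t); w(x,t) = 0 whenever F(x) ≤ k_t and v(x,t) = 0 whenever F(x) ≤ m_t; w(x,t) = w(x,0) + ∫₀ᵗ ∫_{ℝ^d} w(y,s) ρ(y,x) dy ds whenever F(x) > k_t, and v(x,t) = v(x,0)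 + ∫₀ᵗ ∫_{ℝ^d} v(y,s) ρ(y,x) dy ds whenever F(x) > m_t. Let η = max_{0 ≤ j ≤ J−1} ∫_{F⁻¹((a_j(k) ∧ a_j(m), a_j(k) ∨ a_j(m)))} z(x) dx, and suppose ∫_{ℝ^d} |w(x,0) − v(x,0)| dx ≤ η. Then sup_{t ∈ [0,T)} ∫_{ℝ^d} |w(x,t) − v(x,t)| dx ≤ 2 η e^{T}. -/
open MeasureTheory Set Filter Topology
open scoped ENNReal

lemma poly_lint (t : ℝ) (ht0 : 0 ≤ t) (i : ℕ) :
    (∫⁻ u in Ioc (0:ℝ) t, ENNReal.ofReal (u ^ i / i.factorial))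
      = ENNReal.ofReal (t ^ (i+1) / (i+1).factorial) := by
  rw [← MeasureTheory.ofReal_integral_eq_lintegral_ofReal]
  · congr 1
    rw [← intervalIntegral.integral_of_le ht0, intervalIntegral.integral_div,
      integral_pow]
    simp [Nat.factorial_succ]
    rw [div_div]
  · exact ((continuous_pow i).div_const _).integrableOn_Ioc
  · filter_upwards [ae_restrict_mem measurableSet_Ioc] with u hu
    exact div_nonneg (pow_nonneg hu.1.le i) (by positivity)

lemma gronwall_ennreal (T : ℝ) (Λ : ℝ → ℝ≥0∞) (A C : ℝ≥0∞) (hC : C ≠ ⊤)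
    (hbdd : ∀ s ∈ Ico (0:ℝ) T, Λ s ≤ C)
    (hkey : ∀ s ∈ Ico (0:ℝ) T, Λ s ≤ A + ∫⁻ u in Ioc (0:ℝ) s, Λ u) :
    ∀ t ∈ Ico (0:ℝ) T, Λ t ≤ A * ENNReal.ofReal (Real.exp T) := by
  have hstep : ∀ n : ℕ, ∀ t ∈ Ico (0:ℝ) T,
      Λ t ≤ A * ENNReal.ofReal (∑ i ∈ Finset.range n, t ^ i / i.factorial)
        + C * ENNReal.ofReal (t ^ n / n.factorial) := by
    intro n
    induction n with
    | zero =>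
      intro t ht
      simpa using hbdd t ht
    | succ n ih =>
      intro t ht
      have ht0 : 0 ≤ t := ht.1
      have hsub : Ioc (0:ℝ) t ⊆ Ico (0:ℝ) T := fun u hu =>
        ⟨hu.1.le, lt_of_le_of_lt hu.2 ht.2⟩
      have h1 : Λ t ≤ A + ∫⁻ u in Ioc (0:ℝ) t,
          (A * ENNReal.ofReal (∑ i ∈ Finset.range n, u ^ i / i.factorial)
            + C * ENNReal.ofReal (u ^ n / n.factorial)) := by
        refine (hkey t ht).trans (add_le_add_right ?_ A)
        refine lintegral_mono_ae ?_
        filter_upwards [ae_restrict_mem measurableSet_Ioc] with u hu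
        exact ih u (hsub hu)
      have hmeas1 : Measurable fun u : ℝ =>
          ENNReal.ofReal (∑ i ∈ Finset.range n, u ^ i / i.factorial) := by
        exact (by fun_prop : Continuous fun u : ℝ =>
          (∑ i ∈ Finset.range n, u ^ i / i.factorial)).measurable.ennreal_ofReal
      have hmeas2 : Measurable fun u : ℝ => ENNReal.ofReal (u ^ n / n.factorial) :=
        ((continuous_pow n).div_const _).measurable.ennreal_ofReal
      have h2 : (∫⁻ u in Ioc (0:ℝ) t,
          (A * ENNReal.ofReal (∑ i ∈ Finset.range n, u ^ i / i.factorial)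
            + C * ENNReal.ofReal (u ^ n / n.factorial)))
          = A * (∫⁻ u in Ioc (0:ℝ) t,
              ENNReal.ofReal (∑ i ∈ Finset.range n, u ^ i / i.factorial))
            + C * ∫⁻ u in Ioc (0:ℝ) t, ENNReal.ofReal (u ^ n / n.factorial) := by
        rw [lintegral_add_left (hmeas1.const_mul A), lintegral_const_mul _ hmeas1,
          lintegral_const_mul _ hmeas2]
      have h3 : (∫⁻ u in Ioc (0:ℝ) t,
          ENNReal.ofReal (∑ i ∈ Finset.range n, u ^ i / i.factorial))
          = ENNReal.ofReal (∑ i ∈ Finset.range n, t ^ (i+1) / (i+1).factorial) := by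
        rw [setLIntegral_congr_fun measurableSet_Ioc
          (fun u (hu : u ∈ Ioc (0:ℝ) t) =>
            ENNReal.ofReal_sum_of_nonneg (fun i _ =>
              div_nonneg (pow_nonneg hu.1.le i) (by positivity))),
          lintegral_finset_sum _ (fun i _ =>
            ((continuous_pow i).div_const _).measurable.ennreal_ofReal)]
        rw [Finset.sum_congr rfl (fun i _ => poly_lint t ht0 i)]
        exact (ENNReal.ofReal_sum_of_nonneg (fun i _ =>
          div_nonneg (pow_nonneg ht0 _) (by positivity))).symm
      calc Λ t ≤ _ := h1
        _ = _ := by rw [h2, h3, poly_lint t ht0 n]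
        _ ≤ _ := by
            rw [← add_assoc]
            refine add_le_add_left ?_ _
            have : A + A * ENNReal.ofReal (∑ i ∈ Finset.range n, t ^ (i+1) / (i+1).factorial)
                = A * ENNReal.ofReal (1 + ∑ i ∈ Finset.range n, t ^ (i+1) / (i+1).factorial) := by
              rw [ENNReal.ofReal_add (by norm_num)
                (Finset.sum_nonneg fun i _ => div_nonneg (pow_nonneg ht0 _) (by positivity)),
                mul_add, ENNReal.ofReal_one, mul_one]
            rw [this]
            refine mul_le_mul_right (ENNReal.ofReal_le_ofReal ?_) A
            rw [Finset.sum_range_succ' (fun i => t ^ i / (i.factorial : ℝ)) n]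
            simp [add_comm]
  intro t ht
  have ht0 : 0 ≤ t := ht.1
  have hlim : Tendsto (fun n : ℕ => A * ENNReal.ofReal (Real.exp T)
      + C * ENNReal.ofReal (t ^ n / n.factorial)) atTop
      (𝓝 (A * ENNReal.ofReal (Real.exp T))) := by
    have h1 : Tendsto (fun n : ℕ => (t ^ n / n.factorial : ℝ)) atTop (𝓝 0) :=
      FloorSemiring.tendsto_pow_div_factorial_atTop t
    have h2 : Tendsto (fun n : ℕ => ENNReal.ofReal (t ^ n / n.factorial)) atTop (𝓝 0) := by
      simpa [Function.comp_def] using (ENNReal.continuous_ofReal.tendsto 0).comp h1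
    have h3 : Tendsto (fun n : ℕ => C * ENNReal.ofReal (t ^ n / n.factorial)) atTop (𝓝 0) := by
      simpa using ENNReal.Tendsto.const_mul h2 (Or.inr hC)
    simpa using tendsto_const_nhds.add h3
  refine le_of_tendsto_of_tendsto tendsto_const_nhds hlim (Eventually.of_forall fun n => ?_)
  refine (hstep n t ht).trans (add_le_add_left ?_ _)
  refine mul_le_mul_right (ENNReal.ofReal_le_ofReal ?_) A
  exact (Real.sum_le_exp_of_nonneg ht0 n).trans (Real.exp_le_exp.2 ht.2.le)


/-- Stability estimate for the integro-differential systems with piecewise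
constant free boundaries `k` and `m`. -/
theorem piecewise_boundary_stability {d : ℕ} (T : ℝ) (hT : 0 < T)
    (J : ℕ) (hJ : 0 < J) (δ : ℝ) (hδ : δ = T / J)
    (k m : ℝ → ℝ)
    (hk_mono : MonotoneOn k (Ico (0:ℝ) T)) (hm_mono : MonotoneOn m (Ico (0:ℝ) T))
    (hk_pc : ∀ j < J, ∀ t ∈ Ico ((j:ℝ) * δ) (((j:ℝ) + 1) * δ), k t = k ((j:ℝ) * δ))
    (hm_pc : ∀ j < J, ∀ t ∈ Ico ((j:ℝ) * δ) (((j:ℝ) + 1) * δ), m t = m ((j:ℝ) * δ))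
    (F : EuclideanSpace ℝ (Fin d) → ℝ) (hF : Continuous F)
    (hFnull : ∀ a : ℝ, volume (F ⁻¹' {a}) = 0)
    (ρ : EuclideanSpace ℝ (Fin d) → EuclideanSpace ℝ (Fin d) → ℝ)
    (hρ_meas : Measurable (Function.uncurry ρ))
    (hρ_nonneg : ∀ x y, 0 ≤ ρ x y) (hρ_int : ∀ x, Integrable (ρ x))
    (hρ_prob : ∀ x, ∫ y, ρ x y = 1)
    (z : EuclideanSpace ℝ (Fin d) → ℝ) (hz_nonneg : ∀ x, 0 ≤ z x)
    (hz_int : Integrable z)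
    (w v : EuclideanSpace ℝ (Fin d) → ℝ → ℝ)
    (hw_meas : Measurable (Function.uncurry w)) (hv_meas : Measurable (Function.uncurry v))
    (hw_nonneg : ∀ x, ∀ t ∈ Ico (0:ℝ) T, 0 ≤ w x t)
    (hv_nonneg : ∀ x, ∀ t ∈ Ico (0:ℝ) T, 0 ≤ v x t)
    (hw_bdd : ∀ x, ∀ t ∈ Ico (0:ℝ) T, w x t ≤ z x)
    (hv_bdd : ∀ x, ∀ t ∈ Ico (0:ℝ) T, v x t ≤ z x)
    (hw_vanish : ∀ x, ∀ t ∈ Ico (0:ℝ) T, F x ≤ k t → w x t = 0)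
    (hv_vanish : ∀ x, ∀ t ∈ Ico (0:ℝ) T, F x ≤ m t → v x t = 0)
    (hw_eq : ∀ x, ∀ t ∈ Ico (0:ℝ) T, k t < F x →
      w x t = w x 0 + ∫ s in (0:ℝ)..t, ∫ y, w y s * ρ y x)
    (hv_eq : ∀ x, ∀ t ∈ Ico (0:ℝ) T, m t < F x →
      v x t = v x 0 + ∫ s in (0:ℝ)..t, ∫ y, v y s * ρ y x)
    (η : ℝ)
    (hη : η = (Finset.range J).sup' (Finset.nonempty_range_iff.mpr hJ.ne')
      (fun j => ∫ x in F ⁻¹' Ioo (min (k ((j:ℝ) * δ)) (m ((j:ℝ) * δ)))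
        (max (k ((j:ℝ) * δ)) (m ((j:ℝ) * δ))), z x))
    (h0 : ∫ x, |w x 0 - v x 0| ≤ η) :
    ∀ t ∈ Ico (0:ℝ) T, ∫ x, |w x t - v x t| ≤ 2 * η * Real.exp T := by
  -- abbreviations
  set g : EuclideanSpace ℝ (Fin d) → ℝ → ℝ := fun x t => |w x t - v x t| with hgdef
  have hg_unc : Measurable (Function.uncurry g) := (hw_meas.sub hv_meas).abs
  have hg_x' : ∀ t, Measurable (fun x => g x t) := fun t =>
    hg_unc.comp (measurable_id.prodMk measurable_const)
  have hρ_sec : ∀ x : EuclideanSpace ℝ (Fin d), Measurable fun y => ρ y x := fun x =>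
    hρ_meas.comp (measurable_id.prodMk measurable_const)
  have hw_sec : ∀ s : ℝ, Measurable fun y => w y s := fun s =>
    hw_meas.comp (measurable_id.prodMk measurable_const)
  have hv_sec : ∀ s : ℝ, Measurable fun y => v y s := fun s =>
    hv_meas.comp (measurable_id.prodMk measurable_const)
  have hg_nonneg : ∀ x t, 0 ≤ g x t := fun x t => abs_nonneg _
  have hg_le : ∀ x, ∀ t ∈ Ico (0:ℝ) T, g x t ≤ z x := fun x t ht =>
    abs_le.mpr ⟨by linarith [hv_bdd x t ht, hw_nonneg x t ht],
      by linarith [hw_bdd x t ht, hv_nonneg x t ht]⟩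
  have hg_int : ∀ t ∈ Ico (0:ℝ) T, Integrable (fun x => g x t) := fun t ht =>
    hz_int.mono' (hg_x' t).aestronglyMeasurable (ae_of_all _ fun x => by
      rw [Real.norm_eq_abs, abs_of_nonneg (hg_nonneg x t)]; exact hg_le x t ht)
  set Λ : ℝ → ℝ≥0∞ := fun t => ∫⁻ x, ENNReal.ofReal (g x t) with hΛdef
  have hΛ_eq : ∀ t, ∫ x, g x t = (Λ t).toReal := fun t => by
    rw [hΛdef, integral_eq_lintegral_of_nonneg_ae (ae_of_all _ fun x => hg_nonneg x t)
      (hg_x' t).aestronglyMeasurable]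
  set C : ℝ≥0∞ := ∫⁻ x, ENNReal.ofReal (z x) with hCdef
  have hC_top : C ≠ ⊤ := by
    rw [hCdef, ← MeasureTheory.ofReal_integral_eq_lintegral_ofReal hz_int
      (ae_of_all _ hz_nonneg)]
    exact ENNReal.ofReal_ne_top
  have hΛC : ∀ t ∈ Ico (0:ℝ) T, Λ t ≤ C := fun t ht =>
    lintegral_mono fun x => ENNReal.ofReal_le_ofReal (hg_le x t ht)
  have hη0 : 0 ≤ η := le_trans (integral_nonneg fun x => abs_nonneg _) h0
  -- measurable nonnegative representative of z
  have hzae : AEMeasurable z volume := hz_int.aemeasurable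
  set z₀ : EuclideanSpace ℝ (Fin d) → ℝ := fun x => max (hzae.mk z x) 0 with hz₀def
  have hz₀_meas : Measurable z₀ := hzae.measurable_mk.max measurable_const
  have hzz₀ : z =ᵐ[volume] z₀ := by
    filter_upwards [hzae.ae_eq_mk] with x hx
    rw [hz₀def]; simp only [← hx]
    exact (max_eq_left (hz_nonneg x)).symm
  have hz₀_nonneg : ∀ x, 0 ≤ z₀ x := fun x => le_max_right _ _
  have hz₀_int : Integrable z₀ := hz_int.congr hzz₀
  have hρ_left : ∀ y : EuclideanSpace ℝ (Fin d), Measurable fun x => ρ y x := fun y =>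
    hρ_meas.of_uncurry_left
  have hρ_one : ∀ y : EuclideanSpace ℝ (Fin d),
      ∫⁻ x, ENNReal.ofReal (ρ y x) = 1 := fun y => by
    rw [← MeasureTheory.ofReal_integral_eq_lintegral_ofReal (hρ_int y)
      (ae_of_all _ (hρ_nonneg y)), hρ_prob y, ENNReal.ofReal_one]
  have hzρ_meas : Measurable fun p : EuclideanSpace ℝ (Fin d) × EuclideanSpace ℝ (Fin d) =>
      ENNReal.ofReal (z₀ p.2 * ρ p.2 p.1) :=
    ((hz₀_meas.comp measurable_snd).mul
      (hρ_meas.comp (measurable_snd.prodMk measurable_fst))).ennreal_ofReal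
  have hGood_meas : Measurable fun x : EuclideanSpace ℝ (Fin d) =>
      ∫⁻ y, ENNReal.ofReal (z₀ y * ρ y x) :=
    Measurable.lintegral_prod_right' (f := fun p => ENNReal.ofReal (z₀ p.2 * ρ p.2 p.1)) hzρ_meas
  have hGood_ae : ∀ᵐ x : EuclideanSpace ℝ (Fin d),
      (∫⁻ y, ENNReal.ofReal (z₀ y * ρ y x)) < ⊤ := by
    refine ae_lt_top hGood_meas ?_
    have hswap : ∫⁻ x, ∫⁻ y, ENNReal.ofReal (z₀ y * ρ y x)
        = ∫⁻ y, ∫⁻ x, ENNReal.ofReal (z₀ y * ρ y x) := by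
      exact lintegral_lintegral_swap (hzρ_meas.aemeasurable)
    rw [hswap]
    have hinner : ∀ y : EuclideanSpace ℝ (Fin d),
        ∫⁻ x, ENNReal.ofReal (z₀ y * ρ y x) = ENNReal.ofReal (z₀ y) := by
      intro y
      calc ∫⁻ x, ENNReal.ofReal (z₀ y * ρ y x)
          = ∫⁻ x, ENNReal.ofReal (z₀ y) * ENNReal.ofReal (ρ y x) := by
            simp_rw [ENNReal.ofReal_mul (hz₀_nonneg y)]
        _ = ENNReal.ofReal (z₀ y) * ∫⁻ x, ENNReal.ofReal (ρ y x) :=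
            lintegral_const_mul _ ((hρ_left y).ennreal_ofReal)
        _ = ENNReal.ofReal (z₀ y) := by rw [hρ_one y, mul_one]
    rw [lintegral_congr hinner,
      ← MeasureTheory.ofReal_integral_eq_lintegral_ofReal hz₀_int (ae_of_all _ hz₀_nonneg)]
    exact ENNReal.ofReal_ne_top
  -- measurability of the nested kernel integral
  have hgρq_meas : Measurable fun q : (EuclideanSpace ℝ (Fin d) × ℝ) × EuclideanSpace ℝ (Fin d) =>
      ENNReal.ofReal (g q.2 q.1.2 * ρ q.2 q.1.1) :=
    ((hg_unc.comp (measurable_snd.prodMk (measurable_snd.comp measurable_fst))).mul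
      (hρ_meas.comp (measurable_snd.prodMk (measurable_fst.comp measurable_fst)))).ennreal_ofReal
  have hinner_meas : Measurable fun p : EuclideanSpace ℝ (Fin d) × ℝ =>
      ∫⁻ y, ENNReal.ofReal (g y p.2 * ρ y p.1) :=
    Measurable.lintegral_prod_right'
      (f := fun q : (EuclideanSpace ℝ (Fin d) × ℝ) × EuclideanSpace ℝ (Fin d) =>
        ENNReal.ofReal (g q.2 q.1.2 * ρ q.2 q.1.1)) hgρq_meas
  -- the key integral inequality
  have hkey : ∀ t ∈ Ico (0:ℝ) T,
      Λ t ≤ (ENNReal.ofReal η + ENNReal.ofReal η) + ∫⁻ s in Ioc (0:ℝ) t, Λ s := by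
    intro t ht
    have ht0 : 0 ≤ t := ht.1
    have hδ0 : 0 < δ := hδ ▸ div_pos hT (by exact_mod_cast hJ)
    have hJδ : (J:ℝ) * δ = T := by rw [hδ]; field_simp
    obtain ⟨j, hjJ, hkt, hmt⟩ : ∃ j : ℕ, j < J ∧ k t = k ((j:ℝ)*δ) ∧ m t = m ((j:ℝ)*δ) := by
      have h1 : t / δ < (J:ℝ) := by rw [div_lt_iff₀ hδ0, hJδ]; exact ht.2
      have hjJ : ⌊t/δ⌋₊ < J := by
        exact_mod_cast (Nat.floor_lt (div_nonneg ht0 hδ0.le)).mpr (by exact_mod_cast h1)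
      have hmem : t ∈ Ico ((⌊t/δ⌋₊:ℝ) * δ) (((⌊t/δ⌋₊:ℝ) + 1) * δ) :=
        ⟨by rw [← le_div_iff₀ hδ0]; exact Nat.floor_le (div_nonneg ht0 hδ0.le),
         by rw [← div_lt_iff₀ hδ0]; exact Nat.lt_floor_add_one _⟩
      exact ⟨⌊t/δ⌋₊, hjJ, hk_pc _ hjJ t hmem, hm_pc _ hjJ t hmem⟩
    set c₁ : ℝ := min (k ((j:ℝ)*δ)) (m ((j:ℝ)*δ)) with hc₁
    set c₂ : ℝ := max (k ((j:ℝ)*δ)) (m ((j:ℝ)*δ)) with hc₂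
    have hc₁k : c₁ ≤ k t := hkt ▸ min_le_left _ _
    have hc₁m : c₁ ≤ m t := hmt ▸ min_le_right _ _
    have hkc₂ : k t ≤ c₂ := hkt ▸ le_max_left _ _
    have hmc₂ : m t ≤ c₂ := hmt ▸ le_max_right _ _
    set L : EuclideanSpace ℝ (Fin d) → ℝ≥0∞ :=
      fun x => ∫⁻ s in Ioc (0:ℝ) t, ∫⁻ y, ENNReal.ofReal (g y s * ρ y x) with hLdef
    have hL_meas : Measurable L :=
      Measurable.lintegral_prod_right' (ν := volume.restrict (Ioc (0:ℝ) t))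
        (f := fun p : EuclideanSpace ℝ (Fin d) × ℝ =>
          ∫⁻ y, ENNReal.ofReal (g y p.2 * ρ y p.1)) hinner_meas
    -- the pointwise estimate on the region beyond both boundaries
    have hS3bound : ∀ x, (∫⁻ y, ENNReal.ofReal (z₀ y * ρ y x)) < ⊤ →
        k t < F x → m t < F x →
        ENNReal.ofReal (g x t) ≤ ENNReal.ofReal (g x 0) + L x := by
      intro x hx hkx hmx
      have hzρ_int : Integrable (fun y => z₀ y * ρ y x) := by
        refine ⟨(hz₀_meas.mul (hρ_sec x)).aestronglyMeasurable, ?_⟩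
        rw [hasFiniteIntegral_iff_ofReal (ae_of_all _ fun y =>
          mul_nonneg (hz₀_nonneg y) (hρ_nonneg y x))]
        exact hx
      have hwρ_int : ∀ s ∈ Ico (0:ℝ) T, Integrable (fun y => w y s * ρ y x) := by
        intro s hs
        refine hzρ_int.mono' ((hw_sec s).mul (hρ_sec x)).aestronglyMeasurable ?_
        filter_upwards [hzz₀] with y hy
        rw [Real.norm_eq_abs, abs_mul, abs_of_nonneg (hw_nonneg y s hs),
          abs_of_nonneg (hρ_nonneg y x)]
        exact mul_le_mul_of_nonneg_right ((hw_bdd y s hs).trans hy.le) (hρ_nonneg y x)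
      have hvρ_int : ∀ s ∈ Ico (0:ℝ) T, Integrable (fun y => v y s * ρ y x) := by
        intro s hs
        refine hzρ_int.mono' ((hv_sec s).mul (hρ_sec x)).aestronglyMeasurable ?_
        filter_upwards [hzz₀] with y hy
        rw [Real.norm_eq_abs, abs_mul, abs_of_nonneg (hv_nonneg y s hs),
          abs_of_nonneg (hρ_nonneg y x)]
        exact mul_le_mul_of_nonneg_right ((hv_bdd y s hs).trans hy.le) (hρ_nonneg y x)
      have hgρ_int : ∀ s ∈ Ico (0:ℝ) T, Integrable (fun y => g y s * ρ y x) := by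
        intro s hs
        refine hzρ_int.mono' ((hg_x' s).mul (hρ_sec x)).aestronglyMeasurable ?_
        filter_upwards [hzz₀] with y hy
        rw [Real.norm_eq_abs, abs_mul, abs_of_nonneg (hg_nonneg y s),
          abs_of_nonneg (hρ_nonneg y x)]
        exact mul_le_mul_of_nonneg_right ((hg_le y s hs).trans hy.le) (hρ_nonneg y x)
      set N : ℝ := ∫ y, z₀ y * ρ y x with hN
      set Iw : ℝ → ℝ := fun s => ∫ y, w y s * ρ y x with hIw
      set Iv : ℝ → ℝ := fun s => ∫ y, v y s * ρ y x with hIv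
      set hh : ℝ → ℝ := fun s => ∫ y, g y s * ρ y x with hhh
      have hIw_meas : StronglyMeasurable Iw :=
        MeasureTheory.StronglyMeasurable.integral_prod_right'
          (f := fun q : ℝ × EuclideanSpace ℝ (Fin d) => w q.2 q.1 * ρ q.2 x)
          (((hw_meas.comp (measurable_snd.prodMk measurable_fst)).mul
            ((hρ_sec x).comp measurable_snd)).stronglyMeasurable)
      have hIv_meas : StronglyMeasurable Iv :=
        MeasureTheory.StronglyMeasurable.integral_prod_right'
          (f := fun q : ℝ × EuclideanSpace ℝ (Fin d) => v q.2 q.1 * ρ q.2 x)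
          (((hv_meas.comp (measurable_snd.prodMk measurable_fst)).mul
            ((hρ_sec x).comp measurable_snd)).stronglyMeasurable)
      have hhh_meas : StronglyMeasurable hh :=
        MeasureTheory.StronglyMeasurable.integral_prod_right'
          (f := fun q : ℝ × EuclideanSpace ℝ (Fin d) => g q.2 q.1 * ρ q.2 x)
          (((hg_unc.comp (measurable_snd.prodMk measurable_fst)).mul
            ((hρ_sec x).comp measurable_snd)).stronglyMeasurable)
      have habs_bound : ∀ (f : EuclideanSpace ℝ (Fin d) → ℝ → ℝ),
          (∀ y, ∀ s ∈ Ico (0:ℝ) T, 0 ≤ f y s) → (∀ y, ∀ s ∈ Ico (0:ℝ) T, f y s ≤ z y) →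
          (∀ s ∈ Ico (0:ℝ) T, Integrable (fun y => f y s * ρ y x)) →
          ∀ s ∈ Ico (0:ℝ) T, |∫ y, f y s * ρ y x| ≤ N := by
        intro f hf0 hfz hfint s hs
        rw [abs_of_nonneg (integral_nonneg fun y =>
          mul_nonneg (hf0 y s hs) (hρ_nonneg y x))]
        refine integral_mono_ae (hfint s hs) hzρ_int ?_
        filter_upwards [hzz₀] with y hy
        exact mul_le_mul_of_nonneg_right ((hfz y s hs).trans hy.le) (hρ_nonneg y x)
      have hIw_bd : ∀ s ∈ Ico (0:ℝ) T, |Iw s| ≤ N :=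
        habs_bound w hw_nonneg hw_bdd hwρ_int
      have hIv_bd : ∀ s ∈ Ico (0:ℝ) T, |Iv s| ≤ N :=
        habs_bound v hv_nonneg hv_bdd hvρ_int
      have hhh_bd : ∀ s ∈ Ico (0:ℝ) T, |hh s| ≤ N :=
        habs_bound g (fun y s _ => hg_nonneg y s) hg_le hgρ_int
      have hIocIco : Ioc (0:ℝ) t ⊆ Ico (0:ℝ) T := fun s hs =>
        ⟨hs.1.le, lt_of_le_of_lt hs.2 ht.2⟩
      have hii : ∀ (f : ℝ → ℝ), StronglyMeasurable f → (∀ s ∈ Ico (0:ℝ) T, |f s| ≤ N) →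
          IntervalIntegrable f volume 0 t := by
        intro f hfm hfb
        rw [intervalIntegrable_iff_integrableOn_Ioc_of_le ht0]
        refine Integrable.mono' (g := fun _ : ℝ => N)
          (integrableOn_const (hs := measure_Ioc_lt_top.ne))
          hfm.aestronglyMeasurable.restrict ?_
        filter_upwards [ae_restrict_mem measurableSet_Ioc] with s hs
        simpa [Real.norm_eq_abs] using hfb s (hIocIco hs)
      have hIw_ii : IntervalIntegrable Iw volume 0 t := hii Iw hIw_meas hIw_bd
      have hIv_ii : IntervalIntegrable Iv volume 0 t := hii Iv hIv_meas hIv_bd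
      have hhh_ii : IntervalIntegrable hh volume 0 t := hii hh hhh_meas hhh_bd
      have hD : ∀ s ∈ Ico (0:ℝ) T, |Iw s - Iv s| ≤ hh s := by
        intro s hs
        have hsub : Iw s - Iv s = ∫ y, (w y s - v y s) * ρ y x := by
          rw [hIw, hIv, ← integral_sub (hwρ_int s hs) (hvρ_int s hs)]
          congr 1; ext y; ring
        rw [hsub]
        calc |∫ y, (w y s - v y s) * ρ y x| ≤ ∫ y, |w y s - v y s| * |ρ y x| := by
              simpa [Real.norm_eq_abs, abs_mul] using
                norm_integral_le_integral_norm (fun y => (w y s - v y s) * ρ y x)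
          _ = hh s := by
              rw [hhh]; congr 1; ext y
              rw [abs_of_nonneg (hρ_nonneg y x)]
      have heq : w x t - v x t = (w x 0 - v x 0) + ∫ s in (0:ℝ)..t, (Iw s - Iv s) := by
        rw [intervalIntegral.integral_sub hIw_ii hIv_ii, hw_eq x t ht hkx, hv_eq x t ht hmx]
        ring
      have hgt : g x t ≤ g x 0 + ∫ s in (0:ℝ)..t, hh s := by
        have h1 : |∫ s in (0:ℝ)..t, (Iw s - Iv s)| ≤ ∫ s in (0:ℝ)..t, |Iw s - Iv s| :=
          intervalIntegral.abs_integral_le_integral_abs ht0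
        have h2 : (∫ s in (0:ℝ)..t, |Iw s - Iv s|) ≤ ∫ s in (0:ℝ)..t, hh s := by
          refine intervalIntegral.integral_mono_on ht0 (hIw_ii.sub hIv_ii).abs hhh_ii ?_
          intro s hs
          exact hD s ⟨hs.1, lt_of_le_of_lt hs.2 ht.2⟩
        calc g x t = |(w x 0 - v x 0) + ∫ s in (0:ℝ)..t, (Iw s - Iv s)| := by rw [hgdef]; simp only []; rw [heq]
          _ ≤ |w x 0 - v x 0| + |∫ s in (0:ℝ)..t, (Iw s - Iv s)| := abs_add_le _ _
          _ ≤ g x 0 + ∫ s in (0:ℝ)..t, hh s := add_le_add le_rfl (h1.trans h2)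
      have h3 : ENNReal.ofReal (∫ s in (0:ℝ)..t, hh s) ≤ L x := by
        rw [intervalIntegral.integral_of_le ht0,
          MeasureTheory.ofReal_integral_eq_lintegral_ofReal
            ((intervalIntegrable_iff_integrableOn_Ioc_of_le ht0).mp hhh_ii) ?_]
        · refine lintegral_mono_ae ?_
          filter_upwards [ae_restrict_mem measurableSet_Ioc] with s hs
          rw [hhh]
          rw [MeasureTheory.ofReal_integral_eq_lintegral_ofReal (hgρ_int s (hIocIco hs))
            (ae_of_all _ fun y => mul_nonneg (hg_nonneg y s) (hρ_nonneg y x))]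
        · filter_upwards [ae_restrict_mem measurableSet_Ioc] with s hs
          exact integral_nonneg fun y => mul_nonneg (hg_nonneg y s) (hρ_nonneg y x)
      calc ENNReal.ofReal (g x t)
          ≤ ENNReal.ofReal (g x 0 + ∫ s in (0:ℝ)..t, hh s) := ENNReal.ofReal_le_ofReal hgt
        _ ≤ ENNReal.ofReal (g x 0) + ENNReal.ofReal (∫ s in (0:ℝ)..t, hh s) :=
            ENNReal.ofReal_add_le
        _ ≤ ENNReal.ofReal (g x 0) + L x := add_le_add le_rfl h3
    -- split the space according to the boundaries
    set S2 : Set (EuclideanSpace ℝ (Fin d)) := F ⁻¹' Ioc c₁ c₂ with hS2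
    set S3 : Set (EuclideanSpace ℝ (Fin d)) := F ⁻¹' Ioi c₂ with hS3
    have hS2m : MeasurableSet S2 := hF.measurable measurableSet_Ioc
    have hS3m : MeasurableSet S3 := hF.measurable measurableSet_Ioi
    have hmain : ∀ᵐ x : EuclideanSpace ℝ (Fin d), ENNReal.ofReal (g x t) ≤
        S2.indicator (fun x => ENNReal.ofReal (z x)) x
          + S3.indicator (fun x => ENNReal.ofReal (g x 0) + L x) x := by
      filter_upwards [hGood_ae] with x hx
      rcases le_or_gt (F x) c₂ with hle | hgt
      · rcases le_or_gt (F x) c₁ with hle1 | hgt1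
        · have hw0 : w x t = 0 := hw_vanish x t ht (hle1.trans hc₁k)
          have hv0 : v x t = 0 := hv_vanish x t ht (hle1.trans hc₁m)
          have hgz : g x t = 0 := by rw [hgdef]; simp [hw0, hv0]
          simp [hgz]
        · have hx2 : x ∈ S2 := ⟨hgt1, hle⟩
          rw [Set.indicator_of_mem hx2]
          exact le_trans (ENNReal.ofReal_le_ofReal (hg_le x t ht)) le_self_add
      · have hx3 : x ∈ S3 := hgt
        have hx2 : x ∉ S2 := fun h => absurd h.2 (not_le.mpr hgt)
        rw [Set.indicator_of_mem hx3, Set.indicator_of_notMem hx2, zero_add]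
        exact hS3bound x hx (lt_of_le_of_lt hkc₂ hgt) (lt_of_le_of_lt hmc₂ hgt)
    have hsplit : Λ t ≤ (∫⁻ x in S2, ENNReal.ofReal (z x))
        + ((∫⁻ x, ENNReal.ofReal (g x 0)) + ∫⁻ x, L x) := by
      refine (lintegral_mono_ae hmain).trans ?_
      rw [lintegral_add_right _ (Measurable.indicator (f := fun x => ENNReal.ofReal (g x 0) + L x)
          ((hg_x' 0).ennreal_ofReal.add hL_meas) hS3m),
        lintegral_indicator hS2m, lintegral_indicator hS3m]
      refine add_le_add le_rfl ?_
      calc (∫⁻ x in S3, (ENNReal.ofReal (g x 0) + L x))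
          ≤ ∫⁻ x, (ENNReal.ofReal (g x 0) + L x) := setLIntegral_le_lintegral _ _
        _ = (∫⁻ x, ENNReal.ofReal (g x 0)) + ∫⁻ x, L x :=
            lintegral_add_left ((hg_x' 0).ennreal_ofReal) _
    have hterm1 : (∫⁻ x in S2, ENNReal.ofReal (z x)) ≤ ENNReal.ofReal η := by
      have hae : S2 =ᵐ[(volume : Measure (EuclideanSpace ℝ (Fin d)))]
          (F ⁻¹' Ioo c₁ c₂ : Set (EuclideanSpace ℝ (Fin d))) := by
        refine ae_eq_set.mpr ⟨?_, ?_⟩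
        · refine measure_mono_null ?_ (hFnull c₂)
          rintro x ⟨hx1, hx2⟩
          rcases eq_or_lt_of_le (hx1.2 : F x ≤ c₂) with h | h
          · exact h
          · exact absurd ⟨hx1.1, h⟩ hx2
        · refine measure_mono_null ?_ (hFnull c₂)
          rintro x ⟨hx1, hx2⟩
          exact absurd ⟨hx1.1, hx1.2.le⟩ hx2
      rw [setLIntegral_congr hae,
        ← MeasureTheory.ofReal_integral_eq_lintegral_ofReal
          (hz_int.integrableOn) (ae_of_all _ hz_nonneg)]
      refine ENNReal.ofReal_le_ofReal ?_
      rw [hη]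
      exact Finset.le_sup'
        (fun j : ℕ => ∫ x in F ⁻¹' Ioo (min (k ((j:ℝ) * δ)) (m ((j:ℝ) * δ)))
          (max (k ((j:ℝ) * δ)) (m ((j:ℝ) * δ))), z x) (Finset.mem_range.mpr hjJ)
    have hterm2 : (∫⁻ x, ENNReal.ofReal (g x 0)) ≤ ENNReal.ofReal η := by
      rw [← MeasureTheory.ofReal_integral_eq_lintegral_ofReal (hg_int 0 ⟨le_refl 0, hT⟩)
        (ae_of_all _ fun x => hg_nonneg x 0)]
      exact ENNReal.ofReal_le_ofReal h0
    have hterm3 : (∫⁻ x, L x) = ∫⁻ s in Ioc (0:ℝ) t, Λ s := by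
      rw [hLdef]
      rw [lintegral_lintegral_swap hinner_meas.aemeasurable]
      refine lintegral_congr fun s => ?_
      have hswap2 : ∫⁻ x, ∫⁻ y, ENNReal.ofReal (g y s * ρ y x)
          = ∫⁻ y, ∫⁻ x, ENNReal.ofReal (g y s * ρ y x) := by
        refine lintegral_lintegral_swap ?_
        exact (((hg_x' s).comp measurable_snd).mul
          (hρ_meas.comp (measurable_snd.prodMk measurable_fst))).ennreal_ofReal.aemeasurable
      rw [hswap2]
      refine lintegral_congr fun y => ?_
      simp_rw [ENNReal.ofReal_mul (hg_nonneg y s)]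
      rw [lintegral_const_mul _ ((hρ_left y).ennreal_ofReal), hρ_one y, mul_one]
    calc Λ t ≤ _ := hsplit
      _ ≤ ENNReal.ofReal η + (ENNReal.ofReal η + ∫⁻ s in Ioc (0:ℝ) t, Λ s) :=
          add_le_add hterm1 (add_le_add hterm2 (le_of_eq hterm3))
      _ = (ENNReal.ofReal η + ENNReal.ofReal η) + ∫⁻ s in Ioc (0:ℝ) t, Λ s := by
          rw [add_assoc]
  -- Grönwall and conclusion
  have hgron := gronwall_ennreal T Λ (ENNReal.ofReal η + ENNReal.ofReal η) C hC_top hΛC hkey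
  intro t ht
  have h1 : Λ t ≤ ENNReal.ofReal (2 * η * Real.exp T) := by
    refine (hgron t ht).trans_eq ?_
    rw [← ENNReal.ofReal_add hη0 hη0, ← ENNReal.ofReal_mul (by linarith)]
    congr 1; ring
  calc ∫ x, |w x t - v x t| = (Λ t).toReal := hΛ_eq t
    _ ≤ 2 * η * Real.exp T := ENNReal.toReal_le_of_le_ofReal
        (mul_nonneg (by linarith) (Real.exp_pos T).le) h1
end
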